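/- arXiv:2210.12434 — 6 statements merged into one kernel-verified Lean document; each statement's English description precedes it below -/
import Mathlib

section
/- Let φ : ℝ → ℝ² be a ℤ-periodic Lipschitz function with Lipschitz constant L, let b ≥ 2 be an integer and 0 < λ < 1 with bλ > 1, and set γ = 1/(bλ). Define W(x) = Σ_{n=0}^∞ λ^n φ(b^n x). Then for every integer n ≥ 1, every k ∈ {0,…,b^n−1} and every j ∈ {0,…,b−1}, one has |(W((kb+j)/b^{n+1}) − W(k/b^n))/λ^n − (φ(j/b) − φ(0))| ≤ Lγ/(1−γ). -/
/-- For a ℤ-periodic Lipschitz `φ : ℝ → ℝ²` with constant `L`,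
`b ≥ 2`, `0 < λ < 1`, `bλ > 1`, `γ = 1/(bλ)`, and `W(x) = ∑ λ^n φ(b^n x)`:
`|(W((kb+j)/b^(n+1)) − W(k/b^n))/λ^n − (φ(j/b) − φ(0))| ≤ Lγ/(1−γ)`. -/
theorem stmt0 (φ : ℝ → EuclideanSpace ℝ (Fin 2)) (L : ℝ)
    (hper : ∀ x : ℝ, φ (x + 1) = φ x)
    (hLip : ∀ x y : ℝ, ‖φ x - φ y‖ ≤ L * |x - y|)
    (b : ℕ) (hb : 2 ≤ b) (lam : ℝ) (hlam0 : 0 < lam) (hlam1 : lam < 1)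
    (hblam : 1 < (b : ℝ) * lam)
    (γ : ℝ) (hγ : γ = 1 / ((b : ℝ) * lam))
    (W : ℝ → EuclideanSpace ℝ (Fin 2))
    (hW : ∀ x : ℝ, W x = ∑' m : ℕ, lam ^ m • φ ((b : ℝ) ^ m * x)) :
    ∀ n : ℕ, 1 ≤ n → ∀ k : ℕ, k < b ^ n → ∀ j : ℕ, j < b →
      ‖(lam ^ n)⁻¹ • (W (((k * b + j : ℕ) : ℝ) / (b : ℝ) ^ (n + 1)) - W ((k : ℝ) / (b : ℝ) ^ n))
          - (φ ((j : ℝ) / (b : ℝ)) - φ 0)‖ ≤ L * γ / (1 - γ) := by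
  intro n hn k hk j hj
  have hbR : (0 : ℝ) < b := by
    have : (0:ℕ) < b := by omega
    exact_mod_cast this
  have hL : 0 ≤ L := by
    have h1 := hLip 1 0
    have h2 : |(1:ℝ) - 0| = 1 := by norm_num
    rw [h2, mul_one] at h1
    exact le_trans (norm_nonneg _) h1
  have hp : Function.Periodic φ 1 := hper
  -- φ is invariant under adding integers
  have hint : ∀ (x : ℝ) (z : ℤ), φ (x + z) = φ x := by
    intro x z
    have := hp.sub_int_mul_eq (x := x + z) z
    simpa using this.symm
  have hnat : ∀ (N : ℕ), φ (N : ℝ) = φ 0 := by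
    intro N
    have := hint 0 (N : ℤ)
    simpa using this
  -- φ is bounded
  have hC : ∀ x : ℝ, ‖φ x‖ ≤ ‖φ 0‖ + L := by
    intro x
    have h1 : φ x = φ (Int.fract x) := by
      have := hint (Int.fract x) ⌊x⌋
      rw [← this]
      congr 1
      rw [Int.fract]
      ring
    have h2 : ‖φ (Int.fract x) - φ 0‖ ≤ L * |Int.fract x - 0| := hLip _ _
    have h3 : |Int.fract x - 0| ≤ 1 := by
      rw [sub_zero, abs_of_nonneg (Int.fract_nonneg x)]
      exact (Int.fract_lt_one x).le
    have h4 : ‖φ (Int.fract x)‖ ≤ ‖φ (Int.fract x) - φ 0‖ + ‖φ 0‖ := by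
      have := norm_sub_norm_le (φ (Int.fract x)) (φ 0)
      linarith [abs_le.1 (le_refl |‖φ (Int.fract x)‖ - ‖φ 0‖|)]
    rw [h1]
    nlinarith [norm_nonneg (φ (Int.fract x) - φ 0)]
  -- summability
  have hsum : ∀ x : ℝ, Summable (fun m : ℕ => lam ^ m • φ ((b : ℝ) ^ m * x)) := by
    intro x
    apply Summable.of_norm_bounded (g := fun m => (‖φ 0‖ + L) * lam ^ m)
      ((summable_geometric_of_lt_one hlam0.le hlam1).mul_left _)
    intro m
    rw [norm_smul, norm_pow, Real.norm_eq_abs, abs_of_pos hlam0, mul_comm]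
    exact mul_le_mul_of_nonneg_right (hC _) (pow_nonneg hlam0.le m)
  set x₁ : ℝ := ((k * b + j : ℕ) : ℝ) / (b : ℝ) ^ (n + 1) with hx₁
  set x₀ : ℝ := (k : ℝ) / (b : ℝ) ^ n with hx₀
  set g : ℕ → EuclideanSpace ℝ (Fin 2) :=
    fun m => lam ^ m • (φ ((b : ℝ) ^ m * x₁) - φ ((b : ℝ) ^ m * x₀)) with hg
  have hbne : (b : ℝ) ≠ 0 := hbR.ne'
  -- values at large m
  have hv₀ : ∀ m, n ≤ m → φ ((b : ℝ) ^ m * x₀) = φ 0 := by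
    intro m hm
    have he : (b : ℝ) ^ m * x₀ = ((k * b ^ (m - n) : ℕ) : ℝ) := by
      rw [hx₀, show m = n + (m - n) by omega, pow_add]
      push_cast
      field_simp
      rw [Nat.add_sub_cancel_left]
      ring
    rw [he, hnat]
  have hv₁ : ∀ m, n + 1 ≤ m → φ ((b : ℝ) ^ m * x₁) = φ 0 := by
    intro m hm
    have he : (b : ℝ) ^ m * x₁ = (((k * b + j) * b ^ (m - (n + 1)) : ℕ) : ℝ) := by
      rw [hx₁, show m = (n + 1) + (m - (n + 1)) by omega, pow_add]
      push_cast
      field_simp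
      rw [Nat.add_sub_cancel_left]
      ring
    rw [he, hnat]
  have hvn : φ ((b : ℝ) ^ n * x₁) = φ ((j : ℝ) / (b : ℝ)) := by
    have he : (b : ℝ) ^ n * x₁ = (j : ℝ) / (b : ℝ) + (k : ℤ) := by
      rw [hx₁, pow_succ]
      push_cast
      field_simp
      ring
    rw [he, hint]
  -- difference of W as a finite sum
  have hWdiff : W x₁ - W x₀ = ∑ m ∈ Finset.range (n + 1), g m := by
    have hfg : (fun m : ℕ => lam ^ m • φ ((b:ℝ) ^ m * x₁) - lam ^ m • φ ((b:ℝ) ^ m * x₀)) = g := by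
      funext m; simp only [hg, smul_sub]
    rw [hW, hW, ← Summable.tsum_sub (hsum x₁) (hsum x₀), hfg]
    apply tsum_eq_sum
    intro m hm
    have hm' : n + 1 ≤ m := by
      by_contra h
      exact hm (Finset.mem_range.2 (by omega))
    simp only [hg, hv₁ m hm', hv₀ m (by omega), sub_self, smul_zero]
  have hgn : g n = lam ^ n • (φ ((j : ℝ) / (b : ℝ)) - φ 0) := by
    rw [hg]
    simp only [hvn, hv₀ n le_rfl]
  have hlamn : lam ^ n ≠ 0 := (pow_pos hlam0 n).ne'
  -- reduce to the partial sum over range n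
  have hred : (lam ^ n)⁻¹ • (W x₁ - W x₀) - (φ ((j : ℝ) / (b : ℝ)) - φ 0)
      = (lam ^ n)⁻¹ • ∑ m ∈ Finset.range n, g m := by
    rw [hWdiff, Finset.sum_range_succ, hgn, smul_add, smul_smul,
      inv_mul_cancel₀ hlamn, one_smul, add_sub_cancel_right]
  rw [hred]
  -- term bounds
  have hγ0 : 0 < γ := by rw [hγ]; positivity
  have hγ1 : γ < 1 := by
    rw [hγ, div_lt_one (by linarith)]
    linarith
  have hterm : ∀ m ∈ Finset.range n, ‖g m‖ ≤ L * γ ^ (n - m) * lam ^ n := by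
    intro m hm
    have hmn : m < n := Finset.mem_range.1 hm
    obtain ⟨i, hi⟩ : ∃ i, n = m + i ∧ 1 ≤ i := ⟨n - m, by omega, by omega⟩
    have hdiff : (b : ℝ) ^ m * x₁ - (b : ℝ) ^ m * x₀ = (b:ℝ) ^ m * ((j : ℝ) / (b : ℝ) ^ (n + 1)) := by
      rw [hx₁, hx₀, pow_succ]
      push_cast
      field_simp
      ring
    have habs : |(b : ℝ) ^ m * x₁ - (b : ℝ) ^ m * x₀| = (b:ℝ) ^ m * ((j : ℝ) / (b : ℝ) ^ (n + 1)) := by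
      rw [hdiff, abs_of_nonneg (by positivity)]
    have h1 : ‖g m‖ ≤ lam ^ m * (L * ((b:ℝ) ^ m * ((j : ℝ) / (b : ℝ) ^ (n + 1)))) := by
      rw [hg, norm_smul, norm_pow, Real.norm_eq_abs, abs_of_pos hlam0]
      exact mul_le_mul_of_nonneg_left (le_of_le_of_eq (hLip _ _) (by rw [habs]))
        (pow_nonneg hlam0.le m)
    have key : (b:ℝ) ^ m * ((j : ℝ) / (b : ℝ) ^ (n + 1)) ≤ ((b:ℝ) ^ i)⁻¹ := by
      have hjb : (j : ℝ) ≤ (b : ℝ) := by exact_mod_cast hj.le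
      rw [hi.1, show m + i + 1 = m + (i + 1) by ring, pow_add, pow_succ]
      have h2 : (b:ℝ) ^ m * ((j:ℝ) / ((b:ℝ) ^ m * ((b:ℝ) ^ i * (b:ℝ))))
          = (j:ℝ) / ((b:ℝ) ^ i * (b:ℝ)) := by field_simp
      rw [h2, div_le_iff₀ (by positivity)]
      have h3 : ((b:ℝ) ^ i)⁻¹ * ((b:ℝ) ^ i * (b:ℝ)) = (b:ℝ) := by field_simp
      rw [h3]
      exact hjb
    have key2 : γ ^ i * lam ^ n = lam ^ m * ((b:ℝ) ^ i)⁻¹ := by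
      rw [hγ, hi.1, pow_add, div_pow, one_pow, mul_pow]
      field_simp
    calc ‖g m‖ ≤ lam ^ m * (L * ((b:ℝ) ^ m * ((j : ℝ) / (b : ℝ) ^ (n + 1)))) := h1
      _ ≤ lam ^ m * (L * ((b:ℝ) ^ i)⁻¹) := by
          exact mul_le_mul_of_nonneg_left (mul_le_mul_of_nonneg_left key hL)
            (pow_nonneg hlam0.le m)
      _ = L * γ ^ (n - m) * lam ^ n := by
          rw [show n - m = i by omega, mul_assoc, key2]; ring
  -- sum the bounds
  have hsum1 : ‖∑ m ∈ Finset.range n, g m‖ ≤ ∑ m ∈ Finset.range n, L * γ ^ (n - m) * lam ^ n :=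
    norm_sum_le_of_le _ hterm
  rw [norm_smul, Real.norm_eq_abs, abs_inv, abs_of_pos (pow_pos hlam0 n)]
  have hgeom : ∑ m ∈ Finset.range n, γ ^ (n - m) ≤ γ / (1 - γ) := by
    have hrefl : ∑ m ∈ Finset.range n, γ ^ (n - m) = ∑ m ∈ Finset.range n, γ ^ (m + 1) := by
      rw [← Finset.sum_range_reflect]
      apply Finset.sum_congr rfl
      intro m hm
      have hm' := Finset.mem_range.1 hm
      congr 1
      omega
    rw [hrefl]
    have h1 : ∑ m ∈ Finset.range n, γ ^ (m + 1) = γ * ∑ m ∈ Finset.range n, γ ^ m := by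
      rw [Finset.mul_sum]
      apply Finset.sum_congr rfl
      intro m _
      rw [pow_succ]; ring
    rw [h1, div_eq_mul_inv]
    apply mul_le_mul_of_nonneg_left _ hγ0.le
    calc ∑ m ∈ Finset.range n, γ ^ m ≤ ∑' m : ℕ, γ ^ m :=
          Summable.sum_le_tsum _ (fun i _ => pow_nonneg hγ0.le i) (summable_geometric_of_lt_one hγ0.le hγ1)
      _ = (1 - γ)⁻¹ := tsum_geometric_of_lt_one hγ0.le hγ1
  have hfin : ∑ m ∈ Finset.range n, L * γ ^ (n - m) * lam ^ n
      = lam ^ n * (L * ∑ m ∈ Finset.range n, γ ^ (n - m)) := by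
    rw [Finset.mul_sum, Finset.mul_sum]
    exact Finset.sum_congr rfl (fun m _ => by ring)
  calc (lam ^ n)⁻¹ * ‖∑ m ∈ Finset.range n, g m‖
      ≤ (lam ^ n)⁻¹ * (lam ^ n * (L * ∑ m ∈ Finset.range n, γ ^ (n - m))) := by
        rw [← hfin]
        exact mul_le_mul_of_nonneg_left hsum1 (inv_nonneg.2 (pow_nonneg hlam0.le n))
    _ = L * ∑ m ∈ Finset.range n, γ ^ (n - m) := by
        rw [← mul_assoc, inv_mul_cancel₀ hlamn, one_mul]
    _ ≤ L * (γ / (1 - γ)) := mul_le_mul_of_nonneg_left hgeom hL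
    _ = L * γ / (1 - γ) := by ring
end

section
/- Let φ : ℝ → ℝ² be a ℤ-periodic Lipschitz function with Lipschitz constant L, let b ≥ 2 be an integer and 0 < λ < 1 with bλ > 1, and set γ = 1/(bλ). Define W(x) = Σ_{n=0}^∞ λ^n φ(b^n x). Then for every integer n ≥ 1, every k ∈ {0,…,b^n−1} and every j ∈ {0,…,b−1}, one has |(W((kb+j)/b^{n+1}) − W(k/b^n))/λ^n − (φ(j/b) − φ(0)) − λ^{−1}(φ(k/b + j/b²) − φ(k/b))| ≤ Lγ²/(1−γ). -/
private lemma phiZ {E : Type*} [NormedAddCommGroup E] (φ : ℝ → E)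
    (hper : ∀ x : ℝ, φ (x + 1) = φ x) (x : ℝ) : ∀ N : ℤ, φ (x + N) = φ x := by
  intro N
  induction N using Int.induction_on with
  | zero => simp
  | succ i ih =>
    have h : x + ((i : ℤ) + 1 : ℤ) = (x + (i : ℤ)) + 1 := by push_cast; ring
    rw [h, hper, ih]
  | pred i ih =>
    have h : x + (-(i : ℤ) - 1 : ℤ) + 1 = x + (-(i : ℤ) : ℤ) := by push_cast; ring
    rw [← ih, ← h, hper]

/-- Second order version of the basic formula:
`|(W((kb+j)/b^(n+1)) − W(k/b^n))/λ^n − (φ(j/b) − φ(0)) − λ⁻¹(φ(k/b + j/b²) − φ(k/b))| ≤ Lγ²/(1−γ)`. -/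
theorem stmt1 (φ : ℝ → EuclideanSpace ℝ (Fin 2)) (L : ℝ)
    (hper : ∀ x : ℝ, φ (x + 1) = φ x)
    (hLip : ∀ x y : ℝ, ‖φ x - φ y‖ ≤ L * |x - y|)
    (b : ℕ) (hb : 2 ≤ b) (lam : ℝ) (hlam0 : 0 < lam) (hlam1 : lam < 1)
    (hblam : 1 < (b : ℝ) * lam)
    (γ : ℝ) (hγ : γ = 1 / ((b : ℝ) * lam))
    (W : ℝ → EuclideanSpace ℝ (Fin 2))
    (hW : ∀ x : ℝ, W x = ∑' m : ℕ, lam ^ m • φ ((b : ℝ) ^ m * x)) :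
    ∀ n : ℕ, 1 ≤ n → ∀ k : ℕ, k < b ^ n → ∀ j : ℕ, j < b →
      ‖(lam ^ n)⁻¹ • (W (((k * b + j : ℕ) : ℝ) / (b : ℝ) ^ (n + 1)) - W ((k : ℝ) / (b : ℝ) ^ n))
          - (φ ((j : ℝ) / (b : ℝ)) - φ 0)
          - lam⁻¹ • (φ ((k : ℝ) / (b : ℝ) + (j : ℝ) / (b : ℝ) ^ 2) - φ ((k : ℝ) / (b : ℝ)))‖
        ≤ L * γ ^ 2 / (1 - γ) := by
  -- basic facts
  have hb0 : (0 : ℝ) < b := by exact_mod_cast lt_of_lt_of_le Nat.zero_lt_two hb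
  have hbne : (b : ℝ) ≠ 0 := ne_of_gt hb0
  have hlamne : lam ≠ 0 := ne_of_gt hlam0
  have hbl0 : (0 : ℝ) < (b : ℝ) * lam := lt_trans one_pos hblam
  have hγ0 : 0 < γ := by rw [hγ]; positivity
  have hγ1 : γ < 1 := by rw [hγ, div_lt_one hbl0]; exact hblam
  have hL0 : 0 ≤ L := le_trans (norm_nonneg (φ 1 - φ 0)) (by simpa using hLip 1 0)
  -- boundedness of φ
  have hbdd : ∀ y : ℝ, ‖φ y‖ ≤ ‖φ 0‖ + L := by
    intro y
    have h1 : φ y = φ (Int.fract y) := by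
      conv_lhs => rw [show y = Int.fract y + (⌊y⌋ : ℝ) from by
        rw [Int.fract]; ring]
      exact phiZ φ hper _ _
    rw [h1]
    calc ‖φ (Int.fract y)‖ = ‖φ 0 + (φ (Int.fract y) - φ 0)‖ := by rw [add_sub_cancel]
      _ ≤ ‖φ 0‖ + ‖φ (Int.fract y) - φ 0‖ := norm_add_le _ _
      _ ≤ ‖φ 0‖ + L := by
          refine add_le_add (le_refl _) ?_
          calc ‖φ (Int.fract y) - φ 0‖ ≤ L * |Int.fract y - 0| := hLip _ _
            _ ≤ L * 1 := by
                refine mul_le_mul_of_nonneg_left ?_ hL0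
                rw [sub_zero, abs_of_nonneg (Int.fract_nonneg y)]
                exact le_of_lt (Int.fract_lt_one y)
            _ = L := mul_one L
  -- summability
  have hsum : ∀ x : ℝ, Summable (fun m : ℕ => lam ^ m • φ ((b : ℝ) ^ m * x)) := by
    intro x
    apply Summable.of_norm_bounded (g := fun m : ℕ => (‖φ 0‖ + L) * lam ^ m)
    · exact (summable_geometric_of_lt_one hlam0.le hlam1).mul_left _
    · intro m
      rw [norm_smul, Real.norm_eq_abs, abs_pow, abs_of_pos hlam0, mul_comm]
      exact mul_le_mul_of_nonneg_right (hbdd _) (pow_nonneg hlam0.le m)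
  intro n hn k hk j hj
  obtain ⟨p, rfl⟩ : ∃ p, n = p + 1 := ⟨n - 1, (Nat.succ_pred_eq_of_pos hn).symm⟩
  set x1 : ℝ := ((k * b + j : ℕ) : ℝ) / (b : ℝ) ^ (p + 1 + 1) with hx1
  set x0 : ℝ := (k : ℝ) / (b : ℝ) ^ (p + 1) with hx0
  -- tail identities
  have ht1 : ∀ i : ℕ, φ ((b : ℝ) ^ (i + (p + 1 + 1)) * x1) = φ 0 := by
    intro i
    have h : (b : ℝ) ^ (i + (p + 1 + 1)) * x1 = 0 + ((b ^ i * (k * b + j) : ℕ) : ℤ) := by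
      rw [hx1]; push_cast; field_simp; ring
    rw [h, phiZ φ hper]
  have ht0 : ∀ i : ℕ, φ ((b : ℝ) ^ (i + (p + 1 + 1)) * x0) = φ 0 := by
    intro i
    have h : (b : ℝ) ^ (i + (p + 1 + 1)) * x0 = 0 + ((b ^ (i + 1) * k : ℕ) : ℤ) := by
      rw [hx0]; push_cast; field_simp; ring
    rw [h, phiZ φ hper]
  -- split the tsums
  have hA : W x1 - W x0
      = ∑ i ∈ Finset.range (p + 1 + 1), lam ^ i • (φ ((b : ℝ) ^ i * x1) - φ ((b : ℝ) ^ i * x0)) := by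
    have hW1 : W x1 = (∑ i ∈ Finset.range (p + 1 + 1), lam ^ i • φ ((b : ℝ) ^ i * x1))
        + ∑' i : ℕ, lam ^ (i + (p + 1 + 1)) • φ 0 := by
      rw [hW, ← Summable.sum_add_tsum_nat_add (p + 1 + 1) (hsum x1)]
      congr 1
      exact tsum_congr fun i => by rw [ht1 i]
    have hW0 : W x0 = (∑ i ∈ Finset.range (p + 1 + 1), lam ^ i • φ ((b : ℝ) ^ i * x0))
        + ∑' i : ℕ, lam ^ (i + (p + 1 + 1)) • φ 0 := by
      rw [hW, ← Summable.sum_add_tsum_nat_add (p + 1 + 1) (hsum x0)]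
      congr 1
      exact tsum_congr fun i => by rw [ht0 i]
    rw [hW1, hW0]
    rw [show ∀ A B C : EuclideanSpace ℝ (Fin 2), (A + C) - (B + C) = A - B from fun A B C => by abel]
    rw [← Finset.sum_sub_distrib]
    exact Finset.sum_congr rfl fun i _ => (smul_sub _ _ _).symm
  -- evaluate the top two terms
  have e1 : φ ((b : ℝ) ^ (p + 1) * x1) = φ ((j : ℝ) / b) := by
    have h : (b : ℝ) ^ (p + 1) * x1 = (j : ℝ) / b + ((k : ℤ) : ℝ) := by
      rw [hx1]; push_cast; field_simp; ring
    rw [h, phiZ φ hper]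
  have e0 : φ ((b : ℝ) ^ (p + 1) * x0) = φ 0 := by
    have h : (b : ℝ) ^ (p + 1) * x0 = 0 + ((k : ℤ) : ℝ) := by
      rw [hx0]; push_cast; field_simp; ring
    rw [h, phiZ φ hper]
  have e1' : (b : ℝ) ^ p * x1 = (k : ℝ) / b + (j : ℝ) / (b : ℝ) ^ 2 := by
    rw [hx1]; push_cast; field_simp; ring
  have e0' : (b : ℝ) ^ p * x0 = (k : ℝ) / b := by
    rw [hx0]; field_simp; ring
  -- scalar identities
  have hc1 : (lam ^ (p + 1))⁻¹ * lam ^ (p + 1) = 1 := inv_mul_cancel₀ (pow_ne_zero _ hlamne)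
  have hc2 : (lam ^ (p + 1))⁻¹ * lam ^ p = lam⁻¹ := by
    rw [pow_succ]; field_simp
  -- goal rewrite
  have hgoal : (lam ^ (p + 1))⁻¹ • (W x1 - W x0)
      - (φ ((j : ℝ) / b) - φ 0)
      - lam⁻¹ • (φ ((k : ℝ) / b + (j : ℝ) / (b : ℝ) ^ 2) - φ ((k : ℝ) / b))
      = (lam ^ (p + 1))⁻¹ • ∑ i ∈ Finset.range p,
          lam ^ i • (φ ((b : ℝ) ^ i * x1) - φ ((b : ℝ) ^ i * x0)) := by
    rw [hA, Finset.sum_range_succ, Finset.sum_range_succ, e1, e0, e1', e0',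
      smul_add, smul_add, smul_smul, smul_smul, hc1, hc2, one_smul]
    abel
  rw [hgoal]
  -- norm bound
  have key : ∀ i ∈ Finset.range p,
      ‖(lam ^ (p + 1))⁻¹ • (lam ^ i • (φ ((b : ℝ) ^ i * x1) - φ ((b : ℝ) ^ i * x0)))‖
        ≤ L * γ ^ 2 * γ ^ (p - 1 - i) := by
    intro i hi
    rw [Finset.mem_range] at hi
    have hdiff : (b : ℝ) ^ i * x1 - (b : ℝ) ^ i * x0 = (b : ℝ) ^ i * (j : ℝ) / (b : ℝ) ^ (p + 1 + 1) := by
      rw [hx1, hx0]; push_cast; field_simp; ring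
    have hnorm : ‖φ ((b : ℝ) ^ i * x1) - φ ((b : ℝ) ^ i * x0)‖
        ≤ L * ((b : ℝ) ^ i * (j : ℝ) / (b : ℝ) ^ (p + 1 + 1)) := by
      calc ‖φ ((b : ℝ) ^ i * x1) - φ ((b : ℝ) ^ i * x0)‖
          ≤ L * |(b : ℝ) ^ i * x1 - (b : ℝ) ^ i * x0| := hLip _ _
        _ = L * ((b : ℝ) ^ i * (j : ℝ) / (b : ℝ) ^ (p + 1 + 1)) := by
            rw [hdiff, abs_of_nonneg (by positivity)]
    have hγpow : γ ^ 2 * γ ^ (p - 1 - i) = γ ^ (p + 1 - i) := by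
      rw [← pow_add]
      congr 1
      omega
    rw [norm_smul, norm_smul, Real.norm_eq_abs, Real.norm_eq_abs,
      abs_of_pos (by positivity : (0:ℝ) < (lam ^ (p + 1))⁻¹), abs_pow, abs_of_pos hlam0,
      mul_assoc L, hγpow]
    calc (lam ^ (p + 1))⁻¹ * (lam ^ i * ‖φ ((b : ℝ) ^ i * x1) - φ ((b : ℝ) ^ i * x0)‖)
        ≤ (lam ^ (p + 1))⁻¹ * (lam ^ i * (L * ((b : ℝ) ^ i * (j : ℝ) / (b : ℝ) ^ (p + 1 + 1)))) := by
          have := mul_le_mul_of_nonneg_left hnorm (pow_nonneg hlam0.le i)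
          exact mul_le_mul_of_nonneg_left this (by positivity)
      _ = L * ((j : ℝ) / b) * γ ^ (p + 1 - i) := by
          obtain ⟨q, hq⟩ : ∃ q, p + 1 - i = q := ⟨_, rfl⟩
          have hpq : p + 1 = i + q := by omega
          rw [hγ, hq, hpq, div_pow, one_pow, mul_pow, pow_add lam i q,
            pow_succ (b : ℝ) (i + q), pow_add (b : ℝ) i q]
          field_simp
      _ ≤ L * 1 * γ ^ (p + 1 - i) := by
          have hjb : (j : ℝ) / b ≤ 1 := by
            rw [div_le_one hb0]
            exact_mod_cast hj.le
          have := mul_le_mul_of_nonneg_left hjb hL0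
          exact mul_le_mul_of_nonneg_right this (pow_nonneg hγ0.le _)
      _ = L * γ ^ (p + 1 - i) := by rw [mul_one]
  calc ‖(lam ^ (p + 1))⁻¹ • ∑ i ∈ Finset.range p,
        lam ^ i • (φ ((b : ℝ) ^ i * x1) - φ ((b : ℝ) ^ i * x0))‖
      = ‖∑ i ∈ Finset.range p, (lam ^ (p + 1))⁻¹ •
          (lam ^ i • (φ ((b : ℝ) ^ i * x1) - φ ((b : ℝ) ^ i * x0)))‖ := by
        rw [Finset.smul_sum]
    _ ≤ ∑ i ∈ Finset.range p, ‖(lam ^ (p + 1))⁻¹ •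
          (lam ^ i • (φ ((b : ℝ) ^ i * x1) - φ ((b : ℝ) ^ i * x0)))‖ := norm_sum_le _ _
    _ ≤ ∑ i ∈ Finset.range p, L * γ ^ 2 * γ ^ (p - 1 - i) := Finset.sum_le_sum key
    _ = L * γ ^ 2 * ∑ i ∈ Finset.range p, γ ^ (p - 1 - i) := by rw [← Finset.mul_sum]
    _ = L * γ ^ 2 * ∑ i ∈ Finset.range p, γ ^ i := by
        rw [Finset.sum_range_reflect (fun t => γ ^ t) p]
    _ ≤ L * γ ^ 2 * (1 - γ)⁻¹ := by
        refine mul_le_mul_of_nonneg_left ?_ (by positivity)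
        calc (∑ i ∈ Finset.range p, γ ^ i) ≤ ∑' i : ℕ, γ ^ i :=
              Summable.sum_le_tsum _ (fun t _ => pow_nonneg hγ0.le t)
                (summable_geometric_of_lt_one hγ0.le hγ1)
          _ = (1 - γ)⁻¹ := tsum_geometric_of_lt_one hγ0.le hγ1
    _ = L * γ ^ 2 / (1 - γ) := by ring
end

section
/- Let φ : ℝ → ℝ² be ℤ-periodic Lipschitz with image φ̂ = {φ(s) : s ∈ ℝ}. Suppose there exists ε > 0 such that the open ball B(0,ε) is contained in a bounded connected component of ℝ² \ φ̂ (i.e., φ̂ separates B(0,ε) from ∞). Then for every λ ∈ (0,1), φ̂ + B(0, ελ) ⊆ ⋃_{s ∈ [0,1)} (φ(s) + λ·φ̂), where A + B denotes the Minkowski sum and λ·φ̂ = {λa : a ∈ φ̂}. -/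
open scoped Pointwise

/-- If the image `φ̂` of a ℤ-periodic Lipschitz `φ : ℝ → ℝ²` separates
`B(0,ε)` from `∞` (i.e. `B(0,ε)` lies in a bounded connected component of the complement),
then for every `λ ∈ (0,1)`, `φ̂ + B(0,ελ) ⊆ ⋃_{s∈[0,1)} (φ(s) + λ·φ̂)`. -/
theorem stmt2 (φ : ℝ → EuclideanSpace ℝ (Fin 2)) (ε : ℝ) (hε : 0 < ε)
    (hper : ∀ x : ℝ, φ (x + 1) = φ x)
    (hLip : ∃ K : NNReal, LipschitzWith K φ)
    (hball : Metric.ball (0 : EuclideanSpace ℝ (Fin 2)) ε ⊆ (Set.range φ)ᶜ)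
    (hbd : Bornology.IsBounded (connectedComponentIn (Set.range φ)ᶜ 0)) :
    ∀ lam : ℝ, 0 < lam → lam < 1 →
      Set.range φ + Metric.ball (0 : EuclideanSpace ℝ (Fin 2)) (ε * lam) ⊆
        ⋃ s ∈ Set.Ico (0 : ℝ) 1, ({φ s} + lam • Set.range φ) := by
  obtain ⟨K, hK⟩ := hLip
  have hcont : Continuous φ := hK.continuous
  have hp : Function.Periodic φ 1 := hper
  have hfract : ∀ s : ℝ, φ (Int.fract s) = φ s := by
    intro s
    have h := (hp.int_mul ⌊s⌋) (Int.fract s)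
    have h2 : Int.fract s + (⌊s⌋ : ℝ) * 1 = s := by
      rw [Int.fract]; ring
    rw [h2] at h
    exact h.symm
  set C : Set (EuclideanSpace ℝ (Fin 2)) := Set.range φ with hC
  have hrange : C = φ '' Set.Icc 0 1 := by
    apply Set.Subset.antisymm
    · rintro _ ⟨s, rfl⟩
      exact ⟨Int.fract s, ⟨Int.fract_nonneg s, (Int.fract_lt_one s).le⟩, hfract s⟩
    · rintro _ ⟨s, _, rfl⟩; exact Set.mem_range_self s
  have hCcpt : IsCompact C := by
    rw [hrange]; exact isCompact_Icc.image hcont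
  have hCopen : IsOpen Cᶜ := hCcpt.isClosed.isOpen_compl
  set U : Set (EuclideanSpace ℝ (Fin 2)) := connectedComponentIn Cᶜ 0 with hU
  have h0 : (0 : EuclideanSpace ℝ (Fin 2)) ∈ Cᶜ := hball (Metric.mem_ball_self hε)
  have hUopen : IsOpen U := hCopen.connectedComponentIn
  have hballU : Metric.ball (0 : EuclideanSpace ℝ (Fin 2)) ε ⊆ U :=
    (convex_ball 0 ε).isPreconnected.subset_connectedComponentIn
      (Metric.mem_ball_self hε) hball
  -- frontier of U is in C
  have hfr : closure U \ U ⊆ C := by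
    rintro z ⟨hzc, hzU⟩
    by_contra hzC
    have hz : z ∈ Cᶜ := hzC
    have hopen : IsOpen (connectedComponentIn Cᶜ z) := hCopen.connectedComponentIn
    have hzmem : z ∈ connectedComponentIn Cᶜ z := mem_connectedComponentIn hz
    obtain ⟨w, hw1, hw2⟩ :=
      (mem_closure_iff.mp hzc) _ hopen hzmem
    have e1 : connectedComponentIn Cᶜ z = connectedComponentIn Cᶜ w :=
      connectedComponentIn_eq hw1
    have e2 : connectedComponentIn Cᶜ 0 = connectedComponentIn Cᶜ w :=
      connectedComponentIn_eq hw2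
    exact hzU (by rw [hU, e2, ← e1]; exact hzmem)
  have hUclcpt : IsCompact (closure U) :=
    Metric.isCompact_of_isClosed_isBounded isClosed_closure hbd.closure
  have hCne : C.Nonempty := ⟨φ 0, Set.mem_range_self 0⟩
  -- boundary bound: any linear functional on U is dominated by its max on C
  have Blem : ∀ d : EuclideanSpace ℝ (Fin 2), d ≠ 0 →
      ∀ p ∈ C, (∀ z ∈ C, (inner ℝ z d : ℝ) ≤ inner ℝ p d) →
      ∀ u ∈ U, (inner ℝ u d : ℝ) ≤ inner ℝ p d := by
    intro d hd p hpC hpmax u hu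
    have hcont' : ContinuousOn (fun y => (inner ℝ y d : ℝ)) (closure U) :=
      (Continuous.inner continuous_id continuous_const).continuousOn
    have hUne : (closure U).Nonempty := ⟨0, subset_closure (mem_connectedComponentIn h0)⟩
    obtain ⟨y₀, hy₀c, hy₀max⟩ := hUclcpt.exists_isMaxOn hUne hcont'
    have hy₀max' : ∀ z ∈ closure U, (inner ℝ z d : ℝ) ≤ inner ℝ y₀ d := hy₀max
    have hy₀C : y₀ ∈ C := by
      apply hfr
      refine ⟨hy₀c, ?_⟩
      intro hy₀U
      obtain ⟨δ, hδ, hb⟩ := Metric.isOpen_iff.mp hUopen y₀ hy₀U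
      set w := y₀ + (δ / (2 * ‖d‖)) • d with hw
      have hdn : (0:ℝ) < ‖d‖ := norm_pos_iff.mpr hd
      have hwU : w ∈ U := by
        apply hb
        rw [Metric.mem_ball, dist_eq_norm]
        have : w - y₀ = (δ / (2 * ‖d‖)) • d := by rw [hw]; abel
        rw [this, norm_smul]
        have : ‖(δ / (2 * ‖d‖))‖ = δ / (2 * ‖d‖) := by
          rw [Real.norm_eq_abs, abs_of_pos (by positivity)]
        rw [this]
        rw [div_mul_eq_mul_div, mul_comm]
        rw [div_lt_iff₀ (by positivity)]
        nlinarith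
      have hle := hy₀max' w (subset_closure hwU)
      rw [hw, inner_add_left, real_inner_smul_left, real_inner_self_eq_norm_sq] at hle
      have hpos : (0:ℝ) < δ / (2 * ‖d‖) * ‖d‖ ^ 2 := by positivity
      linarith
    calc (inner ℝ u d : ℝ) ≤ inner ℝ y₀ d := hy₀max' u (subset_closure hu)
      _ ≤ inner ℝ p d := hpmax y₀ hy₀C
  -- main argument
  intro lam hl0 hl1 x hx
  rw [Set.mem_add] at hx
  obtain ⟨a, ha, v, hv, hav⟩ := hx
  obtain ⟨t, rfl⟩ := ha
  rw [Metric.mem_ball, dist_zero_right] at hv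
  by_contra hcon
  -- no representation x = φ s + lam • φ u, for any real s
  have hno : ∀ s u : ℝ, x ≠ φ s + lam • φ u := by
    intro s u heq
    apply hcon
    simp only [Set.mem_iUnion, Set.mem_Ico]
    refine ⟨Int.fract s, ⟨Int.fract_nonneg s, Int.fract_lt_one s⟩, ?_⟩
    rw [Set.mem_add]
    exact ⟨φ (Int.fract s), rfl, lam • φ u,
      Set.smul_mem_smul_set (Set.mem_range_self u), by rw [hfract]; exact heq.symm⟩
  set ψ : ℝ → EuclideanSpace ℝ (Fin 2) := fun s => lam⁻¹ • (x - φ s) with hψ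
  have hψcont : Continuous ψ := by rw [hψ]; fun_prop
  have hψcompl : ∀ s, ψ s ∈ Cᶜ := by
    intro s
    rintro ⟨u, hu⟩
    apply hno s u
    have : lam • ψ s = x - φ s := by
      rw [hψ]; simp [smul_smul, mul_inv_cancel₀ (ne_of_gt hl0)]
    rw [hu, this]
    abel
  have hψt : ψ t ∈ Metric.ball (0 : EuclideanSpace ℝ (Fin 2)) ε := by
    rw [Metric.mem_ball, dist_zero_right, hψ]
    have : x - φ t = v := by rw [← hav]; abel
    simp only [this, norm_smul, Real.norm_eq_abs, abs_of_pos (inv_pos.mpr hl0)]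
    rw [inv_mul_lt_iff₀ hl0, mul_comm]
    exact hv
  have hψU : ∀ s, ψ s ∈ U := by
    have h1 : Set.range ψ ⊆ connectedComponentIn Cᶜ (ψ t) :=
      (isConnected_range hψcont).isPreconnected.subset_connectedComponentIn
        (Set.mem_range_self t) (fun _ ⟨s, hs⟩ => hs ▸ hψcompl s)
    have h2 : connectedComponentIn Cᶜ 0 = connectedComponentIn Cᶜ (ψ t) :=
      connectedComponentIn_eq (hballU hψt)
    intro s
    rw [hU, h2]
    exact h1 (Set.mem_range_self s)
  -- directions
  set e : EuclideanSpace ℝ (Fin 2) := φ 0 with he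
  have heC : e ∈ C := Set.mem_range_self 0
  have heB : e ∉ Metric.ball (0 : EuclideanSpace ℝ (Fin 2)) ε := by
    intro h
    exact (hball h) heC
  have hen : ε ≤ ‖e‖ := by
    by_contra h
    exact heB (by rw [Metric.mem_ball, dist_zero_right]; linarith)
  have hene : e ≠ 0 := by
    intro h; rw [h, norm_zero] at hen; linarith
  have hnene : -e ≠ 0 := neg_ne_zero.mpr hene
  -- maximizers over C
  have hinnercont : ∀ d : EuclideanSpace ℝ (Fin 2),
      ContinuousOn (fun y => (inner ℝ y d : ℝ)) C :=
    fun d => (Continuous.inner continuous_id continuous_const).continuousOn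
  obtain ⟨p, hpC, hpmax'⟩ := hCcpt.exists_isMaxOn hCne (hinnercont e)
  obtain ⟨q, hqC, hqmax'⟩ := hCcpt.exists_isMaxOn hCne (hinnercont (-e))
  have hpmax : ∀ z ∈ C, (inner ℝ z e : ℝ) ≤ inner ℝ p e := hpmax'
  have hqmax : ∀ z ∈ C, (inner ℝ z (-e) : ℝ) ≤ inner ℝ q (-e) := hqmax'
  -- bounds on U
  have hUe : ∀ u ∈ U, (inner ℝ u e : ℝ) ≤ inner ℝ p e := Blem e hene p hpC hpmax
  have hUne : ∀ u ∈ U, (inner ℝ u (-e) : ℝ) ≤ inner ℝ q (-e) := Blem (-e) hnene q hqC hqmax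
  -- translate to inequalities on φ s
  have key : ∀ s : ℝ, (inner ℝ (x - φ s) e : ℝ) ≤ lam * inner ℝ p e ∧
      -(inner ℝ (x - φ s) e : ℝ) ≤ lam * inner ℝ q (-e) := by
    intro s
    have h1 := hUe (ψ s) (hψU s)
    have h2 := hUne (ψ s) (hψU s)
    rw [hψ] at h1 h2
    simp only [real_inner_smul_left] at h1 h2
    rw [inner_neg_right] at h2
    constructor
    · have := (mul_le_mul_iff_of_pos_left hl0).mpr h1
      rwa [← mul_assoc, mul_inv_cancel₀ (ne_of_gt hl0), one_mul] at this
    · have := (mul_le_mul_iff_of_pos_left hl0).mpr h2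
      rw [← mul_assoc, mul_inv_cancel₀ (ne_of_gt hl0), one_mul] at this
      linarith
  -- F3: inner ℝ q (-e) ≤ lam * inner ℝ p e - inner ℝ x e
  obtain ⟨sq, hsq⟩ := hqC
  obtain ⟨sp, hsp⟩ := hpC
  have hF3 : (inner ℝ q (-e) : ℝ) ≤ lam * inner ℝ p e - inner ℝ x e := by
    have h := (key sq).1
    rw [hsq] at h
    rw [inner_sub_left] at h
    rw [inner_neg_right]
    linarith
  have hF4 : (1 + lam) * (inner ℝ p e : ℝ) ≤ inner ℝ x e := by
    have h := (key sp).2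
    rw [hsp] at h
    rw [inner_sub_left] at h
    nlinarith [hF3]
  -- x = φ t + v
  have hxe : (inner ℝ x e : ℝ) < inner ℝ p e + ε * lam * ‖e‖ := by
    rw [← hav, inner_add_left]
    have h1 : (inner ℝ (φ t) e : ℝ) ≤ inner ℝ p e := hpmax (φ t) (Set.mem_range_self t)
    have h2 : (inner ℝ v e : ℝ) ≤ ‖v‖ * ‖e‖ := real_inner_le_norm v e
    have h3 : ‖v‖ * ‖e‖ < ε * lam * ‖e‖ := by
      exact mul_lt_mul_of_pos_right hv (norm_pos_iff.mpr hene)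
    linarith
  have hpe : (inner ℝ p e : ℝ) < ε * ‖e‖ := by nlinarith
  have hpe2 : ‖e‖ ^ 2 ≤ (inner ℝ p e : ℝ) := by
    have := hpmax e heC
    rwa [real_inner_self_eq_norm_sq] at this
  nlinarith [hen, hε]
end

section
/- Let φ : ℝ → ℝ² be ℤ-periodic Lipschitz with constant L and image φ̂, and suppose φ̂ separates B(0,ε) from ∞ for some ε > 0. Let β ∈ [0,1), let b ≥ 2 be an integer and λ ∈ (0,1) with bλ > L/(Δ(φ)(1−λ)), where Δ(φ) is the oscillation of φ. Define ℓ_β(s) = φ(s) + λ^{−1}(φ(β + s/b) − φ(β)) and let ℓ̂_β be its image over s ∈ [0,1). Then ℓ̂_β + B(0, ελ) ⊆ ⋃_{s ∈ [0,1)} (ℓ_β(s) + λ·φ̂). -/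
open scoped Pointwise

/-- Auxiliary: a bounded connected component of the complement of a bounded nonempty set
is contained in the closed convex hull of that set. -/
lemma aux_component_subset_hull {E : Type*} [NormedAddCommGroup E] [NormedSpace ℝ E]
    {S : Set E} {x₀ : E} (hne : S.Nonempty)
    (hbd : Bornology.IsBounded (connectedComponentIn Sᶜ x₀)) :
    connectedComponentIn Sᶜ x₀ ⊆ closure (convexHull ℝ S) := by
  intro x hx
  by_contra hxK
  obtain ⟨f, u, hfa, hfx⟩ := geometric_hahn_banach_closed_point
    ((convex_convexHull ℝ S).closure) isClosed_closure hxK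
  set H : Set E := {y | u < f y} with hH
  have hHsub : H ⊆ Sᶜ := by
    intro y hy hyS
    exact absurd (hfa y (subset_closure (subset_convexHull ℝ S hyS))) (not_lt.mpr (le_of_lt hy))
  have hHconv : Convex ℝ H := convex_halfSpace_gt (IsLinearMap.mk f.map_add f.map_smul) u
  have hxH : x ∈ H := hfx
  have hHU : H ⊆ connectedComponentIn Sᶜ x₀ := by
    rw [connectedComponentIn_eq hx]
    exact hHconv.isPreconnected.subset_connectedComponentIn hxH hHsub
  have hHbd : Bornology.IsBounded H := hbd.subset hHU
  obtain ⟨R, hR0, hR⟩ := hHbd.subset_closedBall_lt 0 0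
  obtain ⟨a, ha⟩ := hne
  have hfa' : f a < u := hfa a (subset_closure (subset_convexHull ℝ S ha))
  set w : E := x - a with hw
  have hfw : 0 < f w := by
    have : f w = f x - f a := by simp [hw]
    rw [this]; linarith
  have hwne : w ≠ 0 := by
    intro h; rw [h, map_zero] at hfw; exact lt_irrefl 0 hfw
  have hwnorm : 0 < ‖w‖ := norm_pos_iff.mpr hwne
  set t : ℝ := (R + ‖x‖ + 1) / ‖w‖ with htdef
  have ht0 : 0 ≤ t := by positivity
  have hmem : x + t • w ∈ H := by
    have : f (x + t • w) = f x + t * f w := by simp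
    simp only [hH, Set.mem_setOf_eq, this]
    nlinarith
  have hball : x + t • w ∈ Metric.closedBall (0 : E) R := hR hmem
  rw [Metric.mem_closedBall, dist_zero_right] at hball
  have h1 : ‖t • w‖ ≤ ‖x + t • w‖ + ‖x‖ := by
    have := norm_sub_le (x + t • w) x
    simpa using this
  have h2 : ‖t • w‖ = t * ‖w‖ := by
    rw [norm_smul, Real.norm_eq_abs, abs_of_nonneg ht0]
  have h3 : t * ‖w‖ = R + ‖x‖ + 1 := by
    rw [htdef, div_mul_cancel₀ _ (ne_of_gt hwnorm)]
  rw [h2, h3] at h1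
  linarith

set_option maxHeartbeats 2000000 in
/-- Under the separation condition and `bλ > L/(Δ(φ)(1−λ))`,
`ℓ̂_β + B(0,ελ) ⊆ ⋃_{s∈[0,1)} (ℓ_β(s) + λ·φ̂)`, where
`ℓ_β(s) = φ(s) + λ⁻¹(φ(β+s/b) − φ(β))`. -/
theorem stmt5 (φ : ℝ → EuclideanSpace ℝ (Fin 2)) (L ε : ℝ) (hε : 0 < ε)
    (hper : ∀ x : ℝ, φ (x + 1) = φ x)
    (hLip : ∀ x y : ℝ, ‖φ x - φ y‖ ≤ L * |x - y|)
    (hball : Metric.ball (0 : EuclideanSpace ℝ (Fin 2)) ε ⊆ (Set.range φ)ᶜ)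
    (hbd : Bornology.IsBounded (connectedComponentIn (Set.range φ)ᶜ 0))
    (β : ℝ) (hβ : β ∈ Set.Ico (0 : ℝ) 1)
    (b : ℕ) (hb : 2 ≤ b) (lam : ℝ) (hlam0 : 0 < lam) (hlam1 : lam < 1)
    (hcond : (b : ℝ) * lam > L / (Metric.diam (Set.range φ) * (1 - lam)))
    (ℓ : ℝ → EuclideanSpace ℝ (Fin 2))
    (hℓ : ∀ s : ℝ, ℓ s = φ s + lam⁻¹ • (φ (β + s / (b : ℝ)) - φ β)) :
    (ℓ '' Set.Ico (0 : ℝ) 1) + Metric.ball (0 : EuclideanSpace ℝ (Fin 2)) (ε * lam) ⊆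
      ⋃ s ∈ Set.Ico (0 : ℝ) 1, ({ℓ s} + lam • Set.range φ) := by
  classical
  set Δ : ℝ := Metric.diam (Set.range φ) with hΔdef
  set U : Set (EuclideanSpace ℝ (Fin 2)) := connectedComponentIn (Set.range φ)ᶜ 0 with hUdef
  -- basic facts
  have hL0 : 0 ≤ L := by
    have h := hLip 0 1
    have h0 : (0:ℝ) ≤ ‖φ 0 - φ 1‖ := norm_nonneg _
    have : |(0:ℝ) - 1| = 1 := by norm_num
    rw [this, mul_one] at h
    linarith
  have hcont : Continuous φ := by
    have : LipschitzWith (Real.toNNReal L) φ := by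
      apply LipschitzWith.of_dist_le_mul
      intro x y
      rw [dist_eq_norm, Real.dist_eq]
      calc ‖φ x - φ y‖ ≤ L * |x - y| := hLip x y
        _ ≤ (Real.toNNReal L : ℝ) * |x - y| := by
            exact mul_le_mul_of_nonneg_right (Real.le_coe_toNNReal L) (abs_nonneg _)
    exact this.continuous
  have hperiodic : Function.Periodic φ 1 := hper
  have hfract : ∀ x : ℝ, φ (Int.fract x) = φ x := by
    intro x
    have h1 := hperiodic.sub_int_mul_eq (x := x) (n := ⌊x⌋)
    rw [mul_one] at h1
    rw [Int.self_sub_floor x] at h1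
    exact h1
  have hrange : Set.range φ = φ '' Set.Icc 0 1 := by
    apply Set.Subset.antisymm
    · rintro _ ⟨x, rfl⟩
      exact ⟨Int.fract x, ⟨Int.fract_nonneg x, le_of_lt (Int.fract_lt_one x)⟩, hfract x⟩
    · exact Set.image_subset_range φ _
  have hKco : IsCompact (Set.range φ) := by
    rw [hrange]; exact isCompact_Icc.image hcont
  have hKbd : Bornology.IsBounded (Set.range φ) := hKco.isBounded
  have hhullbd : Bornology.IsBounded (closure (convexHull ℝ (Set.range φ))) :=
    (isBounded_convexHull.mpr hKbd).closure
  have hne : (Set.range φ).Nonempty := ⟨φ 0, 0, rfl⟩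
  -- the component is inside the closed convex hull, so pairwise distances ≤ Δ
  have hUK : U ⊆ closure (convexHull ℝ (Set.range φ)) :=
    aux_component_subset_hull hne hbd
  have hdiamU : ∀ a ∈ U, ∀ c ∈ U, dist a c ≤ Δ := by
    intro a ha c hc
    calc dist a c ≤ Metric.diam (closure (convexHull ℝ (Set.range φ))) :=
          Metric.dist_le_diam_of_mem hhullbd (hUK ha) (hUK hc)
      _ = Δ := by rw [Metric.diam_closure, convexHull_diam]
  have hballU : Metric.ball (0 : EuclideanSpace ℝ (Fin 2)) ε ⊆ U :=
    (convex_ball (0 : EuclideanSpace ℝ (Fin 2)) ε).isPreconnected.subset_connectedComponentIn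
      (Metric.mem_ball_self hε) hball
  -- Δ > 0
  have hΔpos : 0 < Δ := by
    set e : EuclideanSpace ℝ (Fin 2) := EuclideanSpace.single (0 : Fin 2) (ε/2) with hedef
    have henorm : ‖e‖ = ε/2 := by
      rw [hedef, EuclideanSpace.norm_single, Real.norm_eq_abs, abs_of_pos (by linarith)]
    have he : e ∈ Metric.ball (0 : EuclideanSpace ℝ (Fin 2)) ε := by
      rw [Metric.mem_ball, dist_zero_right, henorm]; linarith
    have := hdiamU e (hballU he) 0 (hballU (Metric.mem_ball_self hε))
    rw [dist_zero_right, henorm] at this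
    linarith
  have hbpos : (0:ℝ) < (b:ℝ) := by
    have : (2:ℝ) ≤ (b:ℝ) := by exact_mod_cast hb
    linarith
  have hcond' : L < (b:ℝ) * lam * (Δ * (1 - lam)) :=
    (div_lt_iff₀ (by nlinarith)).mp hcond
  -- set c = L / b
  obtain ⟨c, hcdef⟩ : ∃ c : ℝ, c = L / (b:ℝ) := ⟨_, rfl⟩
  have hc0 : 0 ≤ c := by rw [hcdef]; positivity
  have hc : c < lam * (Δ * (1 - lam)) := by
    rw [hcdef, div_lt_iff₀ hbpos]; nlinarith
  obtain ⟨δ, hδdef⟩ : ∃ d : ℝ, d = (Δ * (1 - lam) - c / lam) / 2 := ⟨_, rfl⟩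
  have hδpos : 0 < δ := by
    rw [hδdef]
    have : c / lam < Δ * (1 - lam) := by
      rw [div_lt_iff₀ hlam0]; nlinarith
    linarith
  have hδleΔ : δ ≤ Δ := by
    have h1 : c / lam ≥ 0 := by positivity
    rw [hδdef]; nlinarith
  have hcontℓ : Continuous ℓ := by
    have h1 : Continuous fun s : ℝ => φ s + lam⁻¹ • (φ (β + s / (b : ℝ)) - φ β) := by
      apply Continuous.add hcont
      apply Continuous.fun_const_smul
      apply Continuous.sub _ continuous_const
      exact hcont.comp (by continuity)
    exact h1.congr fun s => (hℓ s).symm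
  -- main argument
  intro x hx
  rw [Set.mem_add] at hx
  obtain ⟨a, ⟨s₀, hs₀, rfl⟩, v, hv, rfl⟩ := hx
  rw [Metric.mem_ball, dist_zero_right] at hv
  set G : ℝ → EuclideanSpace ℝ (Fin 2) := fun s => lam⁻¹ • (ℓ s₀ + v - ℓ s) with hGdef
  have hGcont : Continuous G := ((continuous_const.sub hcontℓ).fun_const_smul _)
  have hGex : ∃ s ∈ Set.Ico (0:ℝ) 1, G s ∈ Set.range φ := by
    by_contra hcon
    push_neg at hcon
    -- the image of G stays in U
    have hGs₀ : G s₀ ∈ Metric.ball (0 : EuclideanSpace ℝ (Fin 2)) ε := by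
      have : G s₀ = lam⁻¹ • v := by rw [hGdef]; simp
      rw [Metric.mem_ball, dist_zero_right, this, norm_smul, Real.norm_eq_abs,
        abs_of_pos (by positivity)]
      calc lam⁻¹ * ‖v‖ < lam⁻¹ * (ε * lam) := by
            apply mul_lt_mul_of_pos_left hv (by positivity)
        _ = ε := by field_simp
    have hGs₀U : G s₀ ∈ U := hballU hGs₀
    have himg : G '' Set.Ico (0:ℝ) 1 ⊆ U := by
      have hpre : IsPreconnected (G '' Set.Ico (0:ℝ) 1) :=
        isPreconnected_Ico.image G hGcont.continuousOn
      have hsub : G '' Set.Ico (0:ℝ) 1 ⊆ (Set.range φ)ᶜ := by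
        rintro _ ⟨s, hs, rfl⟩
        exact hcon s hs
      have := hpre.subset_connectedComponentIn (⟨s₀, hs₀, rfl⟩ :
        G s₀ ∈ G '' Set.Ico (0:ℝ) 1) hsub
      rwa [← connectedComponentIn_eq (by exact hGs₀U : G s₀ ∈ U)] at this
    -- find two far apart points of the curve
    have hex : ∃ s₁ ∈ Set.Ico (0:ℝ) 1, ∃ s₂ ∈ Set.Ico (0:ℝ) 1,
        Δ - δ < dist (φ s₁) (φ s₂) := by
      by_contra h
      push_neg at h
      have hd : Δ ≤ Δ - δ := by
        rw [hΔdef]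
        apply Metric.diam_le_of_forall_dist_le (by linarith)
        rintro _ ⟨p, rfl⟩ _ ⟨q, rfl⟩
        have h1 := h (Int.fract p) ⟨Int.fract_nonneg p, Int.fract_lt_one p⟩
          (Int.fract q) ⟨Int.fract_nonneg q, Int.fract_lt_one q⟩
        rwa [hfract p, hfract q] at h1
      linarith
    obtain ⟨s₁, hs₁, s₂, hs₂, hfar⟩ := hex
    -- distance estimate
    have hGdiff : G s₁ - G s₂ =
        lam⁻¹ • ((φ s₂ - φ s₁) + lam⁻¹ • (φ (β + s₂ / (b:ℝ)) - φ (β + s₁ / (b:ℝ)))) := by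
      simp only [hGdef, hℓ]
      module
    set A : EuclideanSpace ℝ (Fin 2) := φ s₂ - φ s₁ with hAdef
    set B : EuclideanSpace ℝ (Fin 2) := φ (β + s₂ / (b:ℝ)) - φ (β + s₁ / (b:ℝ)) with hBdef
    have hAnorm : Δ - δ < ‖A‖ := by
      rw [hAdef, ← norm_sub_rev, ← dist_eq_norm]
      exact hfar
    have hBnorm : ‖B‖ ≤ c := by
      have hs12 : |s₂ - s₁| ≤ 1 := by
        rw [abs_sub_le_iff]
        constructor <;> [linarith [hs₁.1, hs₂.2]; linarith [hs₂.1, hs₁.2]]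
      calc ‖B‖ ≤ L * |(β + s₂/(b:ℝ)) - (β + s₁/(b:ℝ))| := hLip _ _
        _ = L * (|s₂ - s₁| / (b:ℝ)) := by
            rw [show (β + s₂/(b:ℝ)) - (β + s₁/(b:ℝ)) = (s₂ - s₁)/(b:ℝ) by ring,
              abs_div, abs_of_pos hbpos]
        _ ≤ L * (1 / (b:ℝ)) := by
            apply mul_le_mul_of_nonneg_left _ hL0
            gcongr
        _ = c := by rw [hcdef]; ring
    have hlow : lam⁻¹ * ((Δ - δ) - lam⁻¹ * c) < dist (G s₁) (G s₂) := by
      rw [dist_eq_norm, hGdiff, norm_smul, Real.norm_eq_abs, abs_of_pos (by positivity)]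
      have hX : ‖lam⁻¹ • B‖ ≤ lam⁻¹ * c := by
        rw [norm_smul, Real.norm_eq_abs, abs_of_pos (by positivity)]
        exact mul_le_mul_of_nonneg_left hBnorm (by positivity)
      have htri : ‖A‖ - ‖lam⁻¹ • B‖ ≤ ‖A + lam⁻¹ • B‖ := by
        have := norm_sub_le (A + lam⁻¹ • B) (lam⁻¹ • B)
        simpa using this
      apply mul_lt_mul_of_pos_left _ (by positivity : (0:ℝ) < lam⁻¹)
      have : (Δ - δ) - lam⁻¹ * c < ‖A‖ - ‖lam⁻¹ • B‖ := by linarith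
      linarith
    have hupp : dist (G s₁) (G s₂) ≤ Δ :=
      hdiamU _ (himg ⟨s₁, hs₁, rfl⟩) _ (himg ⟨s₂, hs₂, rfl⟩)
    -- final arithmetic contradiction
    have hfrac : lam⁻¹ * ((Δ - δ) - lam⁻¹ * c) = ((Δ - δ) * lam - c) / lam ^ 2 := by
      rw [eq_div_iff (by positivity : (lam:ℝ)^2 ≠ 0)]
      field_simp
    have harith : Δ < ((Δ - δ) * lam - c) / lam ^ 2 := by
      rw [lt_div_iff₀ (by positivity)]
      have hδ' : δ * lam * 2 = Δ * (1 - lam) * lam - c := by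
        rw [hδdef]; field_simp
      nlinarith
    rw [hfrac] at hlow
    linarith
  obtain ⟨s, hs, t, ht⟩ := hGex
  apply Set.mem_biUnion hs
  rw [Set.mem_add]
  refine ⟨ℓ s, Set.mem_singleton _, lam • φ t, Set.smul_mem_smul_set ⟨t, rfl⟩, ?_⟩
  rw [ht]
  show ℓ s + lam • (lam⁻¹ • (ℓ s₀ + v - ℓ s)) = ℓ s₀ + v
  rw [smul_inv_smul₀ (ne_of_gt hlam0)]
  abel
end

section
/- For L, ε > 0, the equation c = (L/ε)(2 + 1/(c−1)) has a unique solution c₀ in (1, ∞), and if moreover bλ³ > c₀ with λ ∈ (0,1), b ≥ 2 and γ := 1/(bλ) < 1, then ελ² > L(1/b + γ/(1−γ)). -/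
/-- Uniqueness of the root greater than 1 of the quadratic. -/
lemma quad_uniq (k a c : ℝ) (hk : 0 < k) (ha : 1 < a) (hc : 1 < c)
    (hqa : a^2 - (1+2*k)*a + k = 0) (hqc : c^2 - (1+2*k)*c + k = 0) : c = a := by
  by_contra h
  have h1 : (c - a) * (c + a - (1+2*k)) = 0 := by linear_combination hqc - hqa
  rcases mul_eq_zero.mp h1 with h2 | h2
  · exact h (sub_eq_zero.mp h2)
  · have hsum : c + a = 1 + 2*k := by linarith
    nlinarith [mul_pos (sub_pos.2 hc) (sub_pos.2 ha)]

/-- Equivalence of the fixed-point equation and the quadratic for `c > 1`. -/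
lemma fp_quad (k c : ℝ) (hc : 1 < c) :
    c = k * (2 + 1/(c-1)) ↔ c^2 - (1+2*k)*c + k = 0 := by
  have hcne : c - 1 ≠ 0 := sub_ne_zero.2 (ne_of_gt hc)
  have e : (2 + 1/(c-1)) * (c-1) = 2*(c-1) + 1 := by field_simp
  constructor <;> intro h
  · have h' : c * (c-1) = k * (2*(c-1) + 1) := by nth_rewrite 1 [h]; rw [mul_assoc, e]
    linear_combination h'
  · have h' : c * (c-1) = k * (2*(c-1) + 1) := by linear_combination h
    field_simp
    linear_combination h'

/-- Existence and uniqueness of the root greater than 1. -/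
lemma exuniq (k : ℝ) (hk : 0 < k) :
    ∃! c : ℝ, 1 < c ∧ c = k * (2 + 1/(c-1)) := by
  obtain ⟨s, hs2, hs0⟩ : ∃ s : ℝ, s^2 = 4*k^2+1 ∧ 0 ≤ s :=
    ⟨Real.sqrt (4*k^2+1), Real.sq_sqrt (by positivity), Real.sqrt_nonneg _⟩
  have hs1 : 1 < s := by nlinarith
  have ha1 : 1 < (1 + 2*k + s)/2 := by nlinarith
  refine ⟨(1 + 2*k + s)/2, ⟨ha1, ?_⟩, ?_⟩
  · rw [fp_quad k _ ha1]; nlinarith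
  · rintro c ⟨hc1, hc2⟩
    rw [fp_quad k c hc1] at hc2
    exact quad_uniq k _ c hk ha1 hc1 (by nlinarith) hc2

/-- For `L, ε > 0`, the equation `c = (L/ε)(2 + 1/(c−1))` has a unique
solution `c₀` in `(1,∞)`; and if `bλ³ > c₀` with `λ ∈ (0,1)`, `b ≥ 2` and
`γ := 1/(bλ) < 1`, then `ελ² > L(1/b + γ/(1−γ))`. -/
theorem stmt7 (L ε : ℝ) (hL : 0 < L) (hε : 0 < ε) :
    (∃! c : ℝ, 1 < c ∧ c = (L / ε) * (2 + 1 / (c - 1))) ∧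
      (∀ c : ℝ, 1 < c → c = (L / ε) * (2 + 1 / (c - 1)) →
        ∀ (b : ℕ) (lam : ℝ), 2 ≤ b → 0 < lam → lam < 1 →
          1 / ((b : ℝ) * lam) < 1 → (b : ℝ) * lam ^ 3 > c →
            ε * lam ^ 2 >
              L * (1 / (b : ℝ) +
                (1 / ((b : ℝ) * lam)) / (1 - 1 / ((b : ℝ) * lam)))) := by
  have hk0 : 0 < L / ε := div_pos hL hε
  refine ⟨exuniq (L/ε) hk0, ?_⟩
  rintro c hc1 hc2 b lam hb hlam0 hlam1 hgam hblam
  have hB2 : (2:ℝ) ≤ (b:ℝ) := by exact_mod_cast hb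
  have hB0 : (0:ℝ) < (b:ℝ) := by linarith
  set B : ℝ := (b:ℝ)
  have hBl0 : 0 < B * lam := by positivity
  have ht1 : 1 < B * lam := (div_lt_one hBl0).mp hgam
  have hcne : c - 1 ≠ 0 := sub_ne_zero.2 (ne_of_gt hc1)
  have step1 : ε * c * (c - 1) = L * (2*c - 1) := by
    have e : (2 + 1/(c-1)) * (c-1) = 2*(c-1) + 1 := by field_simp
    have h' : c * (c-1) = (L/ε) * (2*(c-1) + 1) := by nth_rewrite 1 [hc2]; rw [mul_assoc, e]
    rw [div_mul_eq_mul_div, eq_div_iff (ne_of_gt hε)] at h'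
    linear_combination h'
  have hclt : c < B * lam := by
    nlinarith [mul_pos hBl0 (mul_pos (sub_pos.2 hlam1) (by linarith : (0:ℝ) < 1 + lam))]
  have keyA : lam * (B*lam + B - 1) * (c - 1) < (2*c - 1) * (B*lam - 1) := by
    nlinarith [mul_pos (mul_pos (sub_pos.2 hlam1) (sub_pos.2 hc1)) (sub_pos.2 ht1)]
  have step1' : ε * c * (c - 1) * (B*lam - 1) = L * (2*c - 1) * (B*lam - 1) := by
    linear_combination (B*lam - 1) * step1
  have keyB : L * lam * (B*lam + B - 1) < ε * c * (B*lam - 1) := by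
    have h2 : (L * lam * (B*lam + B - 1)) * (c - 1) < (ε * c * (B*lam - 1)) * (c - 1) := by
      nlinarith [mul_lt_mul_of_pos_left keyA hL, step1']
    exact lt_of_mul_lt_mul_right h2 (by linarith)
  have h3 : L * lam * (B*lam + B - 1) < ε * (B * lam^3) * (B*lam - 1) := by
    have hc' : ε * c < ε * (B * lam^3) := by nlinarith
    have := mul_lt_mul_of_pos_right hc' (by linarith : (0:ℝ) < B*lam - 1)
    linarith
  have keyC : L * (B*lam + B - 1) < ε * B * lam^2 * (B*lam - 1) := by
    have h4 : (L * (B*lam + B - 1)) * lam < (ε * B * lam^2 * (B*lam - 1)) * lam := by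
      nlinarith [h3]
    exact lt_of_mul_lt_mul_right h4 (le_of_lt hlam0)
  have hgoal : L * (1/B + (1/(B*lam))/(1 - 1/(B*lam)))
      = L * (B*lam + B - 1) / (B * (B*lam - 1)) := by
    have h1 : B ≠ 0 := ne_of_gt hB0
    have h2 : B * lam ≠ 0 := ne_of_gt hBl0
    have h3 : B * lam - 1 ≠ 0 := sub_ne_zero.2 (ne_of_gt ht1)
    have h4 : 1 - 1/(B*lam) ≠ 0 := ne_of_gt (by linarith : (0:ℝ) < 1 - 1/(B*lam))
    field_simp
    ring
  rw [gt_iff_lt, hgoal, div_lt_iff₀ (mul_pos hB0 (by linarith : (0:ℝ) < B*lam - 1))]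
  nlinarith [keyC]
end

section
/- Let A ⊆ ℝ³ and suppose there exist constants C > 0, s ∈ (0,3) and n₀ such that for all n ≥ n₀, the number N(A, 𝓛ₙ) of b-adic cubes of side b^{−n} meeting A satisfies N(A, 𝓛ₙ) ≥ C·b^{sn}. Then the lower box dimension of A is at least s. In particular, if for each of the b^n intervals [k/b^n,(k+1)/b^n) the image set {W(s) : s ∈ [k/b^n,(k+1)/b^n)} ⊆ ℝ² contains a disc of radius ελ^{n+1}, then the graph of W has lower box dimension at least 3 + 2 log_b λ. -/
/-- Number of generation-`n` `b`-adic cubes of `ℝ³` meeting `A`. -/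
noncomputable def boxCount (b n : ℕ) (A : Set (Fin 3 → ℝ)) : ℕ :=
  Set.ncard {k : Fin 3 → ℤ | ∃ p ∈ A, ∀ i : Fin 3,
    (k i : ℝ) / (b : ℝ) ^ n ≤ p i ∧ p i < ((k i : ℝ) + 1) / (b : ℝ) ^ n}

/-- Lower box dimension of `A ⊆ ℝ³` via `b`-adic cube counting. -/
noncomputable def lowerBoxDim (b : ℕ) (A : Set (Fin 3 → ℝ)) : ℝ :=
  Filter.liminf (fun n : ℕ => Real.log (boxCount b n A) / (n * Real.log b)) Filter.atTop

section helpers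
set_option linter.unusedTactic false
set_option linter.unreachableTactic false
set_option linter.unnecessarySeqFocus false

open Filter Real in
lemma cube_index_mem (b n : ℕ) (hb : 0 < b) (A : Set (Fin 3 → ℝ)) {p : Fin 3 → ℝ}
    (hp : p ∈ A) :
    (fun i => ⌊p i * (b:ℝ)^n⌋) ∈ {k : Fin 3 → ℤ | ∃ p ∈ A, ∀ i : Fin 3,
      (k i : ℝ) / (b : ℝ) ^ n ≤ p i ∧ p i < ((k i : ℝ) + 1) / (b : ℝ) ^ n} := by
  have hb' : (0:ℝ) < b := by exact_mod_cast hb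
  have hβ : (0:ℝ) < (b:ℝ)^n := by positivity
  exact ⟨p, hp, fun i => ⟨by rw [div_le_iff₀ hβ]; exact Int.floor_le _,
    by rw [lt_div_iff₀ hβ]; exact Int.lt_floor_add_one _⟩⟩

open Filter Real in
lemma S_subset_pi (b n : ℕ) (hb : 0 < b) (A : Set (Fin 3 → ℝ)) (R : ℝ)
    (hA : ∀ p ∈ A, ∀ i, |p i| ≤ R) :
    {k : Fin 3 → ℤ | ∃ p ∈ A, ∀ i : Fin 3,
      (k i : ℝ) / (b : ℝ) ^ n ≤ p i ∧ p i < ((k i : ℝ) + 1) / (b : ℝ) ^ n} ⊆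
    ↑(Fintype.piFinset fun _ : Fin 3 =>
        Finset.Icc (⌈-(R * (b:ℝ)^n)⌉ - 1) ⌊R * (b:ℝ)^n⌋) := by
  rintro k ⟨p, hp, hk⟩
  simp only [Finset.coe_sort_coe, Finset.mem_coe, Fintype.mem_piFinset, Finset.mem_Icc]
  intro i
  have hb' : (0:ℝ) < b := by exact_mod_cast hb
  have hβ : (0:ℝ) < (b:ℝ)^n := by positivity
  obtain ⟨h1, h2⟩ := hk i
  have hRi := hA p hp i
  rw [div_le_iff₀ hβ] at h1
  rw [lt_div_iff₀ hβ] at h2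
  constructor
  · have h3 : -(R * (b:ℝ)^n) ≤ ((k i + 1 : ℤ) : ℝ) := by
      push_cast
      nlinarith [abs_le.mp hRi |>.1]
    have := Int.ceil_le.mpr h3
    omega
  · have h3 : (k i : ℝ) ≤ R * (b:ℝ)^n := by
      nlinarith [abs_le.mp hRi |>.2]
    exact Int.le_floor.mpr h3

open Filter Real in
lemma count_le (b n : ℕ) (hb : 0 < b) (A : Set (Fin 3 → ℝ)) (R : ℝ) (hR : 0 ≤ R)
    (hA : ∀ p ∈ A, ∀ i, |p i| ≤ R) :
    (boxCount b n A : ℝ) ≤ ((2*R+2) * (b:ℝ)^n)^3 := by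
  have hb' : (1:ℝ) ≤ b := by exact_mod_cast hb
  have hβ : (1:ℝ) ≤ (b:ℝ)^n := one_le_pow₀ hb'
  have hsub := S_subset_pi b n hb A R hA
  have hcard : boxCount b n A ≤
      (Fintype.piFinset fun _ : Fin 3 =>
        Finset.Icc (⌈-(R * (b:ℝ)^n)⌉ - 1) ⌊R * (b:ℝ)^n⌋).card := by
    calc boxCount b n A ≤ Set.ncard (↑(Fintype.piFinset fun _ : Fin 3 =>
          Finset.Icc (⌈-(R * (b:ℝ)^n)⌉ - 1) ⌊R * (b:ℝ)^n⌋) : Set (Fin 3 → ℤ)) :=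
        Set.ncard_le_ncard hsub (Finset.finite_toSet _)
      _ = _ := Set.ncard_coe_finset _
  have hIcc : ((Finset.Icc (⌈-(R * (b:ℝ)^n)⌉ - 1) ⌊R * (b:ℝ)^n⌋).card : ℝ)
      ≤ (2*R+2) * (b:ℝ)^n := by
    rw [Int.card_Icc]
    have h1 : (⌊R * (b:ℝ)^n⌋ : ℝ) ≤ R * (b:ℝ)^n := Int.floor_le _
    have h2 : -(R * (b:ℝ)^n) ≤ (⌈-(R * (b:ℝ)^n)⌉ : ℝ) := Int.le_ceil _
    have h3 : ((⌊R * (b:ℝ)^n⌋ + 1 - (⌈-(R * (b:ℝ)^n)⌉ - 1)).toNat : ℝ)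
        ≤ max ((⌊R * (b:ℝ)^n⌋ + 1 - (⌈-(R * (b:ℝ)^n)⌉ - 1) : ℤ) : ℝ) 0 := by
      have := Int.toNat_eq_max (⌊R * (b:ℝ)^n⌋ + 1 - (⌈-(R * (b:ℝ)^n)⌉ - 1))
      exact_mod_cast le_of_eq (by exact_mod_cast this)
    refine h3.trans (max_le ?_ (by nlinarith))
    push_cast
    nlinarith
  calc (boxCount b n A : ℝ) ≤ ((Fintype.piFinset fun _ : Fin 3 =>
        Finset.Icc (⌈-(R * (b:ℝ)^n)⌉ - 1) ⌊R * (b:ℝ)^n⌋).card : ℝ) := by exact_mod_cast hcard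
    _ = (((Finset.Icc (⌈-(R * (b:ℝ)^n)⌉ - 1) ⌊R * (b:ℝ)^n⌋).card : ℝ))^3 := by
        rw [Fintype.card_piFinset]
        push_cast
        simp [Finset.prod_const]
    _ ≤ ((2*R+2) * (b:ℝ)^n)^3 := by
        apply pow_le_pow_left₀ (by positivity) hIcc

open Filter Real in
lemma A_bounded (b n₀ : ℕ) (hb : 0 < b) (A : Set (Fin 3 → ℝ))
    (hfin : {k : Fin 3 → ℤ | ∃ p ∈ A, ∀ i : Fin 3,
      (k i : ℝ) / (b : ℝ) ^ n₀ ≤ p i ∧ p i < ((k i : ℝ) + 1) / (b : ℝ) ^ n₀}.Finite) :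
    ∃ R : ℝ, 0 ≤ R ∧ ∀ p ∈ A, ∀ i, |p i| ≤ R := by
  set S := {k : Fin 3 → ℤ | ∃ p ∈ A, ∀ i : Fin 3,
      (k i : ℝ) / (b : ℝ) ^ n₀ ≤ p i ∧ p i < ((k i : ℝ) + 1) / (b : ℝ) ^ n₀} with hS
  obtain ⟨M, hM⟩ := (hfin.image (fun k : Fin 3 → ℤ => |k 0| ⊔ (|k 1| ⊔ |k 2|))).bddAbove
  have hMk : ∀ k ∈ S, ∀ i : Fin 3, |k i| ≤ M := by
    intro k hk i
    have := hM (Set.mem_image_of_mem _ hk)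
    fin_cases i <;> simp_all <;> omega
  refine ⟨|(M:ℝ)| + 1, by positivity, ?_⟩
  intro p hp i
  have hkmem := cube_index_mem b n₀ hb A hp
  have hki := hMk _ hkmem i
  have hβ : (1:ℝ) ≤ (b:ℝ)^n₀ := one_le_pow₀ (by exact_mod_cast hb)
  have h1 : (⌊p i * (b:ℝ)^n₀⌋ : ℝ) ≤ p i * (b:ℝ)^n₀ := Int.floor_le _
  have h2 : p i * (b:ℝ)^n₀ < (⌊p i * (b:ℝ)^n₀⌋ : ℝ) + 1 := Int.lt_floor_add_one _
  have habs : |(⌊p i * (b:ℝ)^n₀⌋ : ℝ)| ≤ |(M:ℝ)| := by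
    rw [← Int.cast_abs]
    calc ((|⌊p i * (b:ℝ)^n₀⌋| : ℤ) : ℝ) ≤ ((M:ℤ):ℝ) := by exact_mod_cast hki
      _ ≤ |(M:ℝ)| := le_abs_self _
  rw [abs_le] at habs ⊢
  constructor
  · nlinarith [abs_nonneg (M:ℝ)]
  · nlinarith [abs_nonneg (M:ℝ)]

open Filter Real in
lemma part1 (b : ℕ) (hb : 2 ≤ b) (A : Set (Fin 3 → ℝ)) (C s : ℝ) (n₀ : ℕ)
    (hC : 0 < C)
    (h : ∀ n : ℕ, n₀ ≤ n → C * (b : ℝ) ^ (s * n) ≤ (boxCount b n A : ℝ)) :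
    s ≤ lowerBoxDim b A := by
  have hb1 : (1:ℝ) < b := by exact_mod_cast Nat.lt_of_lt_of_le one_lt_two hb
  have hb0 : (0:ℝ) < b := lt_trans one_pos hb1
  have hbn : 0 < b := by omega
  have hlogb : 0 < Real.log b := Real.log_pos hb1
  set f := fun n : ℕ => Real.log (boxCount b n A) / (n * Real.log b) with hf
  set g := fun n : ℕ => s + Real.log C / (n * Real.log b) with hgdef
  -- finiteness at generation n₀, hence A bounded, hence cobounded
  have hfin : {k : Fin 3 → ℤ | ∃ p ∈ A, ∀ i : Fin 3,
      (k i : ℝ) / (b : ℝ) ^ n₀ ≤ p i ∧ p i < ((k i : ℝ) + 1) / (b : ℝ) ^ n₀}.Finite := by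
    by_contra hinf
    have h0 : boxCount b n₀ A = 0 := Set.Infinite.ncard (by simpa using hinf)
    have := h n₀ le_rfl
    rw [h0] at this
    norm_num at this
    have hpos0 : (0:ℝ) < C * (b:ℝ) ^ (s * (n₀:ℝ)) := by positivity
    linarith
  obtain ⟨R, hR0, hRA⟩ := A_bounded b n₀ hbn A hfin
  set B := 3 * Real.log (2*R+2) / Real.log b + 3 with hB
  have hlogR : 0 < Real.log (2*R+2) := Real.log_pos (by linarith)
  have hfB : ∀ n : ℕ, 1 ≤ n → f n ≤ B := by
    intro n hn1
    have hn' : (0:ℝ) < (n:ℝ) * Real.log b := by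
      have : (0:ℝ) < (n:ℝ) := by exact_mod_cast hn1
      positivity
    rcases Nat.eq_zero_or_pos (boxCount b n A) with h0 | hpos
    · simp only [hf, h0, Nat.cast_zero, Real.log_zero, zero_div]
      positivity
    · have hcle := count_le b n hbn A R hR0 hRA
      have hlog : Real.log (boxCount b n A) ≤ 3 * (Real.log (2*R+2) + n * Real.log b) := by
        calc Real.log (boxCount b n A) ≤ Real.log (((2*R+2) * (b:ℝ)^n)^3) :=
            Real.log_le_log (by exact_mod_cast hpos) hcle
          _ = 3 * (Real.log (2*R+2) + n * Real.log b) := by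
            rw [Real.log_pow, Real.log_mul (by positivity) (by positivity), Real.log_pow]
            push_cast; ring
      have h1n : (1:ℝ) ≤ (n:ℝ) := by exact_mod_cast hn1
      calc f n ≤ (3 * (Real.log (2*R+2) + n * Real.log b)) / ((n:ℝ) * Real.log b) :=
          div_le_div_of_nonneg_right hlog hn'.le |>.trans_eq rfl
        _ = 3 * Real.log (2*R+2) / ((n:ℝ) * Real.log b) + 3 := by field_simp
        _ ≤ B := by
            rw [hB]
            gcongr <;> nlinarith
  have hcob : IsCoboundedUnder (· ≥ ·) atTop f :=
    IsCoboundedUnder.of_frequently_le (a := B)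
      (((eventually_ge_atTop 1).mono hfB).frequently)
  have hg : Tendsto g atTop (nhds s) := by
    have h0 : Tendsto (fun n : ℕ => Real.log C / (n * Real.log b)) atTop (nhds 0) := by
      apply Tendsto.div_atTop tendsto_const_nhds
      exact (tendsto_natCast_atTop_atTop).atTop_mul_const hlogb
    simpa using tendsto_const_nhds.add h0
  have hfg : ∀ᶠ n in atTop, g n ≤ f n := by
    filter_upwards [eventually_ge_atTop n₀, eventually_ge_atTop 1] with n hn hn1
    have hβ : (0:ℝ) < (b:ℝ) ^ (s * (n:ℝ)) := rpow_pos_of_pos hb0 _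
    have hcount := h n hn
    have hpos : (0:ℝ) < (boxCount b n A : ℝ) := lt_of_lt_of_le (by positivity) hcount
    have hlog : Real.log C + s * ((n:ℝ) * Real.log b) ≤ Real.log (boxCount b n A) := by
      have h2 := Real.log_le_log (by positivity) hcount
      rwa [Real.log_mul (ne_of_gt hC) (ne_of_gt hβ), Real.log_rpow hb0, mul_assoc] at h2
    have hn' : 0 < (n:ℝ) * Real.log b := by
      have : (0:ℝ) < (n:ℝ) := by exact_mod_cast hn1
      positivity
    calc g n = (Real.log C + s * ((n:ℝ) * Real.log b)) / ((n:ℝ) * Real.log b) := by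
          simp only [hgdef]
          field_simp
          ring
      _ ≤ f n := div_le_div_of_nonneg_right hlog hn'.le |>.trans_eq rfl
  have hu : IsBoundedUnder (· ≥ ·) atTop g := hg.isBoundedUnder_ge
  calc s = liminf g atTop := hg.liminf_eq.symm
    _ ≤ liminf f atTop := liminf_le_liminf hfg hu hcob
    _ = lowerBoxDim b A := rfl

open Filter Real in
lemma count_lower (b n : ℕ) (hb : 2 ≤ b) (lam ε : ℝ) (W : ℝ → EuclideanSpace ℝ (Fin 2))
    (hlam0 : 0 < lam) (hε : 0 < ε)
    (R : ℝ) (hRA : ∀ p ∈ {p : Fin 3 → ℝ | ∃ x ∈ Set.Icc (0 : ℝ) 1, p = ![x, W x 0, W x 1]},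
      ∀ i, |p i| ≤ R)
    (hr2 : 2 ≤ ε * lam ^ (n+1) * (b:ℝ)^n)
    (hball : ∀ k : ℕ, k < b ^ n → ∃ z : EuclideanSpace ℝ (Fin 2),
        Metric.ball z (ε * lam ^ (n + 1)) ⊆
          W '' Set.Ico ((k : ℝ) / (b : ℝ) ^ n) (((k : ℝ) + 1) / (b : ℝ) ^ n)) :
    (b:ℝ)^n * (ε * lam ^ (n+1) * (b:ℝ)^n / 2)^2 ≤
      (boxCount b n {p : Fin 3 → ℝ | ∃ x ∈ Set.Icc (0 : ℝ) 1, p = ![x, W x 0, W x 1]} : ℝ) := by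
  classical
  set A := {p : Fin 3 → ℝ | ∃ x ∈ Set.Icc (0 : ℝ) 1, p = ![x, W x 0, W x 1]} with hA
  set S := {k : Fin 3 → ℤ | ∃ p ∈ A, ∀ i : Fin 3,
    (k i : ℝ) / (b : ℝ) ^ n ≤ p i ∧ p i < ((k i : ℝ) + 1) / (b : ℝ) ^ n} with hSdef
  have hb0 : (0:ℝ) < b := by positivity
  set β : ℝ := (b:ℝ)^n with hβdef
  have hβ : (0:ℝ) < β := by positivity
  set r : ℝ := ε * lam ^ (n+1) with hrdef
  have hr0 : 0 < r := by positivity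
  -- choose centers
  have hz : ∀ k : ℕ, k < b ^ n → ∃ z : EuclideanSpace ℝ (Fin 2),
      Metric.ball z r ⊆ W '' Set.Ico ((k : ℝ) / β) (((k : ℝ) + 1) / β) := hball
  set z : ℕ → EuclideanSpace ℝ (Fin 2) :=
    fun k => if h : k < b ^ n then (hz k h).choose else 0 with hzdef
  have hzspec : ∀ k (h : k < b ^ n),
      Metric.ball (z k) r ⊆ W '' Set.Ico ((k : ℝ) / β) (((k : ℝ) + 1) / β) := by
    intro k h
    simp only [hzdef, dif_pos h]
    exact (hz k h).choose_spec
  -- integer intervals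
  set I : ℝ → Finset ℤ := fun c => Finset.Icc ⌈(c - r/2)*β⌉ ⌊(c + r/2)*β⌋ with hIdef
  have hImem : ∀ c : ℝ, ∀ j ∈ I c, |(j:ℝ)/β - c| ≤ r/2 := by
    intro c j hj
    simp only [hIdef, Finset.mem_Icc] at hj
    have h1 : (c - r/2)*β ≤ (j:ℝ) := le_trans (Int.le_ceil _) (by exact_mod_cast hj.1)
    have h2 : (j:ℝ) ≤ (c + r/2)*β := le_trans (by exact_mod_cast hj.2) (Int.floor_le _)
    have e1 : c - r/2 ≤ (j:ℝ)/β := (le_div_iff₀ hβ).mpr h1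
    have e2 : (j:ℝ)/β ≤ c + r/2 := (div_le_iff₀ hβ).mpr h2
    rw [abs_le]
    constructor <;> linarith
  have hIcard : ∀ c : ℝ, r*β - 1 ≤ ((I c).card : ℝ) := by
    intro c
    simp only [hIdef, Int.card_Icc]
    have h1 : (c + r/2)*β - 1 < (⌊(c + r/2)*β⌋ : ℝ) := Int.sub_one_lt_floor _
    have h2 : (⌈(c - r/2)*β⌉ : ℝ) < (c - r/2)*β + 1 := Int.ceil_lt_add_one _
    have h3 : (⌊(c + r/2)*β⌋ + 1 - ⌈(c - r/2)*β⌉ : ℤ) ≤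
        ((⌊(c + r/2)*β⌋ + 1 - ⌈(c - r/2)*β⌉ : ℤ).toNat : ℤ) := Int.self_le_toNat _
    have h4 : ((⌊(c + r/2)*β⌋ + 1 - ⌈(c - r/2)*β⌉ : ℤ) : ℝ) ≤
        (((⌊(c + r/2)*β⌋ + 1 - ⌈(c - r/2)*β⌉ : ℤ).toNat : ℤ) : ℝ) := by exact_mod_cast h3
    push_cast at h4 ⊢
    nlinarith
  -- membership of constructed cubes
  have hmem : ∀ k : ℕ, k < b ^ n → ∀ j₁ ∈ I (z k 0), ∀ j₂ ∈ I (z k 1),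
      (![(k:ℤ), j₁, j₂] : Fin 3 → ℤ) ∈ S := by
    intro k hk j₁ hj₁ j₂ hj₂
    set q : EuclideanSpace ℝ (Fin 2) := !₂[(j₁:ℝ)/β, (j₂:ℝ)/β] with hq
    have hq0 : q 0 = (j₁:ℝ)/β := rfl
    have hq1 : q 1 = (j₂:ℝ)/β := rfl
    have hqball : q ∈ Metric.ball (z k) r := by
      rw [Metric.mem_ball]
      have hd : dist q (z k) = Real.sqrt (dist (q 0) (z k 0)^2 + dist (q 1) (z k 1)^2) := by
        rw [EuclideanSpace.dist_eq]; congr 1; simp [Fin.sum_univ_two]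
      rw [hd]
      have e1 : dist (q 0) (z k 0) ≤ r/2 := by
        rw [hq0, Real.dist_eq]; exact hImem _ _ hj₁
      have e2 : dist (q 1) (z k 1) ≤ r/2 := by
        rw [hq1, Real.dist_eq]; exact hImem _ _ hj₂
      have : dist (q 0) (z k 0)^2 + dist (q 1) (z k 1)^2 < r^2 := by
        nlinarith [dist_nonneg (x := q 0) (y := z k 0), dist_nonneg (x := q 1) (y := z k 1)]
      calc Real.sqrt (dist (q 0) (z k 0)^2 + dist (q 1) (z k 1)^2)
          < Real.sqrt (r^2) := by
            apply Real.sqrt_lt_sqrt (by positivity) this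
        _ = r := Real.sqrt_sq hr0.le
    obtain ⟨x, hx, hWx⟩ := hzspec k hk hqball
    have hkb : (k:ℝ) + 1 ≤ β := by
      rw [hβdef]
      exact_mod_cast Nat.succ_le_of_lt hk
    have hx01 : x ∈ Set.Icc (0:ℝ) 1 := by
      constructor
      · exact le_trans (by positivity) hx.1
      · have := hx.2
        have h2 : ((k:ℝ)+1)/β ≤ 1 := by
          rw [div_le_one hβ]; exact hkb
        linarith
    refine ⟨![x, W x 0, W x 1], ⟨x, hx01, rfl⟩, ?_⟩
    intro i
    fin_cases i
    · simpa using ⟨hx.1, hx.2⟩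
    · show ((j₁:ℝ))/β ≤ (W x) 0 ∧ (W x) 0 < ((j₁:ℝ)+1)/β
      rw [hWx, hq0]
      exact ⟨le_rfl, by gcongr <;> linarith⟩
    · show ((j₂:ℝ))/β ≤ (W x) 1 ∧ (W x) 1 < ((j₂:ℝ)+1)/β
      rw [hWx, hq1]
      exact ⟨le_rfl, by gcongr <;> linarith⟩
  -- S is finite
  have hSfin : S.Finite :=
    Set.Finite.subset (Finset.finite_toSet _) (S_subset_pi b n (by omega) A R hRA)
  -- the index finset
  set T : Finset (ℤ × ℤ × ℤ) := (Finset.range (b^n)).biUnion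
      (fun k => ((I (z k 0)) ×ˢ (I (z k 1))).image (fun j => ((k:ℤ), j.1, j.2))) with hT
  have hhalf : r*β/2 ≤ r*β - 1 := by linarith
  have hIcard' : ∀ c, (r*β/2 : ℝ) ≤ ((I c).card : ℝ) := fun c => le_trans hhalf (hIcard c)
  have hdisj : ∀ k ∈ Finset.range (b^n), ∀ k' ∈ Finset.range (b^n), k ≠ k' →
      Disjoint (((I (z k 0)) ×ˢ (I (z k 1))).image (fun j : ℤ×ℤ => ((k:ℤ), j.1, j.2)))
        (((I (z k' 0)) ×ˢ (I (z k' 1))).image (fun j : ℤ×ℤ => ((k':ℤ), j.1, j.2))) := by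
    intro k _ k' _ hkk
    rw [Finset.disjoint_left]
    intro t ht ht'
    simp only [Finset.mem_image, Finset.mem_product] at ht ht'
    obtain ⟨j, _, rfl⟩ := ht
    obtain ⟨j', _, he⟩ := ht'
    have := congrArg Prod.fst he
    simp only at this
    exact hkk (by exact_mod_cast this.symm)
  have hcard_im : ∀ k : ℕ,
      (((I (z k 0)) ×ˢ (I (z k 1))).image (fun j : ℤ×ℤ => ((k:ℤ), j.1, j.2))).card
        = (I (z k 0)).card * (I (z k 1)).card := by
    intro k
    rw [Finset.card_image_of_injective _ (fun a b h => ?_), Finset.card_product]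
    have := congrArg Prod.snd h
    simpa [Prod.ext_iff] using this
  have hTcard : (b:ℝ)^n * (r*β/2)^2 ≤ (T.card : ℝ) := by
    rw [hT, Finset.card_biUnion hdisj]
    push_cast
    calc (b:ℝ)^n * (r*β/2)^2 = ∑ _k ∈ Finset.range (b^n), (r*β/2)^2 := by
          rw [Finset.sum_const, Finset.card_range]; push_cast; ring
      _ ≤ ∑ k ∈ Finset.range (b^n), ((((I (z k 0)) ×ˢ (I (z k 1))).image
            (fun j : ℤ×ℤ => ((k:ℤ), j.1, j.2))).card : ℝ) := by
          refine Finset.sum_le_sum fun k _ => ?_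
          rw [hcard_im k]
          push_cast
          nlinarith [hIcard' (z k 0), hIcard' (z k 1), hr0, hβ]
  set φ : ℤ×ℤ×ℤ → (Fin 3 → ℤ) := fun t => ![t.1, t.2.1, t.2.2] with hφdef
  have hφ : Function.Injective φ := by
    intro a c h
    have h0 := congrFun h 0
    have h1 := congrFun h 1
    have h2 := congrFun h 2
    simp only [hφdef, Matrix.cons_val_zero, Matrix.cons_val_one, Matrix.head_cons,
      Matrix.cons_val_two, Matrix.tail_cons] at h0 h1 h2
    exact Prod.ext h0 (Prod.ext h1 h2)
  have hsub : ↑(T.image φ) ⊆ S := by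
    intro t ht
    simp only [Finset.coe_image, Set.mem_image, Finset.mem_coe] at ht
    obtain ⟨t', ht', rfl⟩ := ht
    simp only [hT, Finset.mem_biUnion, Finset.mem_range, Finset.mem_image,
      Finset.mem_product] at ht'
    obtain ⟨k, hk, j, hj, rfl⟩ := ht'
    exact hmem k hk j.1 hj.1 j.2 hj.2
  calc (b:ℝ)^n * (r*β/2)^2 ≤ (T.card : ℝ) := hTcard
    _ = ((T.image φ).card : ℝ) := by rw [Finset.card_image_of_injective _ hφ]
    _ = (Set.ncard (↑(T.image φ) : Set (Fin 3 → ℤ)) : ℝ) := by rw [Set.ncard_coe_finset]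
    _ ≤ (Set.ncard S : ℝ) := by
        exact_mod_cast Set.ncard_le_ncard hsub hSfin
    _ = _ := rfl

open Filter Real in
lemma part2 (b : ℕ) (hb : 2 ≤ b) (lam ε : ℝ) (W : ℝ → EuclideanSpace ℝ (Fin 2))
    (hlam1 : 1 / (b : ℝ) < lam) (hlam2 : lam < 1) (hε : 0 < ε) (hW : Continuous W)
    (hball : ∀ n : ℕ, ∀ k : ℕ, k < b ^ n → ∃ z : EuclideanSpace ℝ (Fin 2),
        Metric.ball z (ε * lam ^ (n + 1)) ⊆
          W '' Set.Ico ((k : ℝ) / (b : ℝ) ^ n) (((k : ℝ) + 1) / (b : ℝ) ^ n)) :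
    3 + 2 * Real.logb b lam ≤
      lowerBoxDim b {p : Fin 3 → ℝ | ∃ x ∈ Set.Icc (0 : ℝ) 1, p = ![x, W x 0, W x 1]} := by
  have hb0 : (0:ℝ) < b := by positivity
  have hb1 : (1:ℝ) < b := by exact_mod_cast Nat.lt_of_lt_of_le one_lt_two hb
  have hbne1 : (b:ℝ) ≠ 1 := ne_of_gt hb1
  have hlam0 : 0 < lam := lt_trans (by positivity) hlam1
  -- bound on the graph
  obtain ⟨x₀, _, hx₀⟩ := isCompact_Icc.exists_isMaxOn (s := Set.Icc (0:ℝ) 1)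
    (f := fun x : ℝ => |W x 0| + |W x 1|) ⟨0, by norm_num⟩ (by fun_prop)
  set R : ℝ := |W x₀ 0| + |W x₀ 1| + 1 with hR
  have hRA : ∀ p ∈ {p : Fin 3 → ℝ | ∃ x ∈ Set.Icc (0 : ℝ) 1, p = ![x, W x 0, W x 1]},
      ∀ i, |p i| ≤ R := by
    rintro p ⟨x, hx, rfl⟩ i
    have h1 := hx₀ hx
    simp only [Set.mem_setOf_eq] at h1
    fin_cases i
    · show |x| ≤ R
      rw [abs_le, hR]
      obtain ⟨hx1, hx2⟩ := hx
      constructor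
      · nlinarith [abs_nonneg (W x₀ 0), abs_nonneg (W x₀ 1)]
      · nlinarith [abs_nonneg (W x₀ 0), abs_nonneg (W x₀ 1)]
    · show |W x 0| ≤ R
      have := abs_nonneg (W x 1); rw [hR]; linarith
    · show |W x 1| ≤ R
      have := abs_nonneg (W x 0); rw [hR]; linarith
  -- choose n₀
  have hlb : 1 < lam * b := by
    rw [div_lt_iff₀ hb0] at hlam1; linarith
  have htend : Tendsto (fun n : ℕ => ε * lam * (lam * b)^n) atTop atTop :=
    (tendsto_pow_atTop_atTop_of_one_lt hlb).const_mul_atTop (by positivity)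
  obtain ⟨N, hN⟩ := (htend.eventually_ge_atTop 2).exists_forall_of_atTop
  apply part1 b hb _ (ε^2 * lam^2 / 4) _ N (by positivity)
  intro n hn
  have hr2 : 2 ≤ ε * lam ^ (n+1) * (b:ℝ)^n := by
    have := hN n hn
    calc (2:ℝ) ≤ ε * lam * (lam * b)^n := this
      _ = ε * lam ^ (n+1) * (b:ℝ)^n := by rw [mul_pow]; ring
  have hcount := count_lower b n hb lam ε W hlam0 hε R hRA hr2 (hball n)
  refine le_trans (le_of_eq ?_) hcount
  have h1 : ((b:ℝ))^((3:ℝ) + 2*Real.logb b lam) = lam^2 * (b:ℝ)^3 := by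
    rw [Real.rpow_add hb0]
    rw [show ((3:ℝ)) = ((3:ℕ):ℝ) by norm_num, Real.rpow_natCast]
    rw [show (2:ℝ)*Real.logb b lam = Real.logb b lam * ((2:ℕ):ℝ) by ring,
      Real.rpow_mul hb0.le, Real.rpow_natCast, Real.rpow_logb hb0 hbne1 hlam0]
    ring
  have h2 : ((b:ℝ))^(((3:ℝ) + 2*Real.logb b lam) * (n:ℝ)) = (lam^2 * (b:ℝ)^3)^n := by
    rw [Real.rpow_mul hb0.le, h1, Real.rpow_natCast]
  rw [h2]
  rw [mul_pow, ← pow_mul, ← pow_mul]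
  ring

end helpers

/-- If `N(A,𝓛ₙ) ≥ C·b^{sn}` for all `n ≥ n₀`, then the lower box dimension
of `A ⊆ ℝ³` is at least `s`. In particular, if over each `b`-adic interval
`[k/b^n,(k+1)/b^n)` the image of `W` contains a disc of radius `ελ^{n+1}`, then the
graph of `W` has lower box dimension at least `3 + 2 log_b λ`. -/
theorem stmt9 (b : ℕ) (hb : 2 ≤ b) :
    (∀ (A : Set (Fin 3 → ℝ)) (C s : ℝ) (n₀ : ℕ), 0 < C → 0 < s → s < 3 →
        (∀ n : ℕ, n₀ ≤ n → C * (b : ℝ) ^ (s * n) ≤ (boxCount b n A : ℝ)) →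
          s ≤ lowerBoxDim b A) ∧
      (∀ (lam ε : ℝ) (W : ℝ → EuclideanSpace ℝ (Fin 2)), 1 / (b : ℝ) < lam → lam < 1 →
        0 < ε → Continuous W →
        (∀ n : ℕ, ∀ k : ℕ, k < b ^ n → ∃ z : EuclideanSpace ℝ (Fin 2),
          Metric.ball z (ε * lam ^ (n + 1)) ⊆
            W '' Set.Ico ((k : ℝ) / (b : ℝ) ^ n) (((k : ℝ) + 1) / (b : ℝ) ^ n)) →
        3 + 2 * Real.logb b lam ≤
          lowerBoxDim b
            {p : Fin 3 → ℝ | ∃ x ∈ Set.Icc (0 : ℝ) 1, p = ![x, W x 0, W x 1]}) := by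
  constructor
  · intro A C s n₀ hC _ _ h
    exact part1 b hb A C s n₀ hC h
  · intro lam ε W hlam1 hlam2 hε hW hball
    exact part2 b hb lam ε W hlam1 hlam2 hε hW hball
end
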